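/- arXiv:1610.06743 — 2 statements merged into one kernel-verified Lean document; each statement's English description precedes it below -/
import Mathlib

section
/- Intra-step Wasserstein continuity for the follow-the-leader scheme with boundary data: under the hypotheses of the IBVP FTL scheme, for every k and every k τ_m < s < t < (k+1) τ_m one has W_{Q+L,1}(ρ^{n,m}(t,·), ρ^{n,m}(s,·)) ≤ (3/2)(Q + L) v_max (t − s). -/
open MeasureTheory Set Filter Topology
open scoped ENNReal NNReal

noncomputable section

/-- Mass carried by particle `i` (`q` for the leftmost queuing particle `i = -N`, `ℓ`
otherwise). -/
def pmass (q ℓ : ℝ) (N : ℕ) (i : ℤ) : ℝ := if i = -(N : ℤ) then q else ℓ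

/-- Index `k` of the time interval `(k τ, (k+1) τ]` containing `t`. -/
def kIdx (τ t : ℝ) : ℕ := ⌈t / τ⌉₊ - 1

/-- The follow-the-leader scheme for the initial-boundary value problem for the LWR model
on `Ω = (0,1)`, with time-varying Dirichlet boundary data `rb0`, `rb1` (discretized with
time step `τ = T/m`), `n` particles discretizing the initial datum `rbar`, `N` queuing
particles of total mass `Q`, and rearrangement of the particles outside `Ω` at each time
`k τ`. -/
structure FTLibvp (ρmax vmax T : ℝ) (v rbar rb0 rb1 : ℝ → ℝ) (n m : ℕ) where
  /-- particle positions on the `k`-th time interval -/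
  x : ℕ → ℤ → ℝ → ℝ
  /-- initial particle positions -/
  xbar : ℤ → ℝ
  /-- number of particles that strictly crossed `x = 0` during `(0, k τ]` -/
  h0 : ℕ → ℕ
  /-- number of particles that crossed `x = 1` during `(0, k τ]` -/
  h1 : ℕ → ℕ
  L : ℝ
  ℓ : ℝ
  τ : ℝ
  Q : ℝ
  N : ℕ
  q : ℝ
  hL : L = ∫ y in Set.Ioo (0:ℝ) 1, rbar y
  hℓ : ℓ = L / n
  hτ : τ = T / m
  hQ : Q = 2 * T * vmax * ρmax
  hN : N = ⌈Q / ℓ⌉₊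
  hq : q = Q - ℓ * ((N : ℝ) - 1)
  init0 : xbar 0 = 0
  initpos : ∀ i : ℤ, 1 ≤ i → i ≤ (n : ℤ) →
    xbar i = sSup {y : ℝ | y ∈ Set.Ioo (0:ℝ) 1 ∧ (∫ s in Set.Ioc (xbar (i-1)) y, rbar s) < ℓ}
  initqueue : ∀ i : ℤ, -(N : ℤ) + 1 ≤ i → i ≤ -1 → xbar i = (i : ℝ) * (ℓ / rb0 0)
  initlast : xbar (-(N : ℤ)) = xbar (-(N : ℤ) + 1) - q / rb0 0
  ic : ∀ i : ℤ, -(N : ℤ) ≤ i → i ≤ (n : ℤ) → x 0 i 0 = xbar i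
  order : ∀ k : ℕ, k < m → ∀ t ∈ Set.Icc ((k : ℝ) * τ) (((k : ℝ) + 1) * τ),
    ∀ i : ℤ, -(N : ℤ) ≤ i → i ≤ (n : ℤ) - 1 → x k i t < x k (i+1) t
  ode : ∀ k : ℕ, k < m → ∀ i : ℤ, -(N : ℤ) ≤ i → i ≤ (n : ℤ) - 1 →
    ∀ t ∈ Set.Icc ((k : ℝ) * τ) (((k : ℝ) + 1) * τ),
      HasDerivWithinAt (x k i)
        (v (pmass q ℓ N i / (x k (i+1) t - x k i t)))
        (Set.Icc ((k : ℝ) * τ) (((k : ℝ) + 1) * τ)) t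
  odeLead : ∀ k : ℕ, k < m → ∀ t ∈ Set.Icc ((k : ℝ) * τ) (((k : ℝ) + 1) * τ),
      HasDerivWithinAt (x k (n : ℤ)) (v (rb1 ((k : ℝ) * τ)))
        (Set.Icc ((k : ℝ) * τ) (((k : ℝ) + 1) * τ)) t
  cross0 : ∀ k : ℕ, 1 ≤ k → k ≤ m → ∀ i : ℤ, -(N : ℤ) ≤ i → i ≤ (n : ℤ) →
    (0 < x (k-1) i ((k : ℝ) * τ) ↔ -(h0 k : ℤ) ≤ i)
  cross1 : ∀ k : ℕ, 1 ≤ k → k ≤ m → ∀ i : ℤ, -(N : ℤ) ≤ i → i ≤ (n : ℤ) →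
    (1 ≤ x (k-1) i ((k : ℝ) * τ) ↔ (n : ℤ) - (h1 k : ℤ) + 1 ≤ i)
  rearrMid : ∀ k : ℕ, 1 ≤ k → k < m → ∀ i : ℤ,
    -(h0 k : ℤ) - 1 ≤ i → i ≤ (n : ℤ) - (h1 k : ℤ) + 1 →
    x k i ((k : ℝ) * τ) = x (k-1) i ((k : ℝ) * τ)
  rearrRight : ∀ k : ℕ, 1 ≤ k → k < m → ∀ i : ℤ,
    (n : ℤ) - (h1 k : ℤ) + 2 ≤ i → i ≤ (n : ℤ) →
    x k i ((k : ℝ) * τ) =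
      x (k-1) ((n : ℤ) - (h1 k : ℤ) + 1) ((k : ℝ) * τ) +
        ((i : ℝ) - (n : ℝ) + (h1 k : ℝ) - 1) * (ℓ / rb1 ((k : ℝ) * τ))
  rearrLeft : ∀ k : ℕ, 1 ≤ k → k < m → ∀ i : ℤ,
    -(N : ℤ) + 1 ≤ i → i ≤ -(h0 k : ℤ) - 2 →
    x k i ((k : ℝ) * τ) =
      x (k-1) (-(h0 k : ℤ) - 1) ((k : ℝ) * τ) +
        ((i : ℝ) + (h0 k : ℝ) + 1) * (ℓ / rb0 ((k : ℝ) * τ))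
  rearrLast : ∀ k : ℕ, 1 ≤ k → k < m →
    x k (-(N : ℤ)) ((k : ℝ) * τ) = x k (-(N : ℤ) + 1) ((k : ℝ) * τ) - q / rb0 ((k : ℝ) * τ)

/-- The discrete density `ρ^{n,m}(t,·)` of the IBVP follow-the-leader scheme. -/
def FTLibvp.dens {ρmax vmax T : ℝ} {v rbar rb0 rb1 : ℝ → ℝ} {n m : ℕ}
    (S : FTLibvp ρmax vmax T v rbar rb0 rb1 n m) (t y : ℝ) : ℝ :=
  ∑ i ∈ Finset.Icc (-(S.N : ℤ)) ((n : ℤ) - 1),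
    Set.indicator (Set.Ico (S.x (kIdx S.τ t) i t) (S.x (kIdx S.τ t) (i+1) t))
      (fun _ => pmass S.q S.ℓ S.N i /
        (S.x (kIdx S.τ t) (i+1) t - S.x (kIdx S.τ t) i t)) y

/-- Pseudo-inverse of (the cumulative distribution of) a density `ρ`. -/
def pseudoInv (ρ : ℝ → ℝ) (z : ℝ) : ℝ :=
  sInf {x : ℝ | z < ∫ y in Set.Iic x, ρ y}

/-- Scaled 1-Wasserstein distance `W_{M,1}` between two densities of total mass `M`. -/
def scaledWass (M : ℝ) (ρ₁ ρ₂ : ℝ → ℝ) : ℝ :=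
  ∫ z in Set.Ioc (0:ℝ) M, |pseudoInv ρ₁ z - pseudoInv ρ₂ z|


/-- sInf comparison -/
lemma sInf_le_sInf_add {A B : Set ℝ} {c : ℝ} (hA : A.Nonempty) (hB : BddBelow B)
    (h : ∀ x ∈ A, x + c ∈ B) : sInf B ≤ sInf A + c := by
  have h1 : ∀ x ∈ A, sInf B ≤ x + c := fun x hx => csInf_le hB (h x hx)
  have h2 : ∀ x ∈ A, sInf B - c ≤ x := fun x hx => by linarith [h1 x hx]
  linarith [le_csInf hA h2]

/-- volume of `Iic y ∩ Ico a b` -/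
lemma vol_Iic_inter_Ico {a b y : ℝ} (hab : a < b) :
    (volume (Iic y ∩ Ico a b)).toReal = max (min y b - a) 0 := by
  rcases lt_or_ge y a with hy | hy
  · have : Iic y ∩ Ico a b = ∅ := by
      ext z; simp only [mem_inter_iff, mem_Iic, mem_Ico, mem_empty_iff_false, iff_false]
      rintro ⟨h1, h2, h3⟩; linarith
    rw [this]
    simp only [measure_empty, ENNReal.toReal_zero]
    rw [max_eq_right (by linarith [min_le_left y b])]
  · rcases lt_or_ge y b with hyb | hyb
    · have : Iic y ∩ Ico a b = Icc a y := by
        ext z; simp only [mem_inter_iff, mem_Iic, mem_Ico, mem_Icc]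
        constructor
        · rintro ⟨h1, h2, h3⟩; exact ⟨h2, h1⟩
        · rintro ⟨h1, h2⟩; exact ⟨h2, h1, by linarith⟩
      rw [this, Real.volume_Icc, ENNReal.toReal_ofReal (by linarith)]
      rw [min_eq_left hyb.le, max_eq_left (by linarith)]
    · have : Iic y ∩ Ico a b = Ico a b := by
        apply inter_eq_right.mpr
        intro z hz; exact le_trans (le_of_lt hz.2) hyb
      rw [this, Real.volume_Ico, ENNReal.toReal_ofReal (by linarith)]
      rw [min_eq_right hyb, max_eq_left (by linarith)]

/-- integral of a constant indicator over `Iic y` -/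
lemma integral_indicator_Ico {a b y r : ℝ} (hab : a < b) :
    ∫ z in Iic y, (Ico a b).indicator (fun _ => r) z = r * max (min y b - a) 0 := by
  rw [setIntegral_indicator measurableSet_Ico, setIntegral_const, smul_eq_mul,
    mul_comm, measureReal_def, vol_Iic_inter_Ico hab]

/-- the CDF fraction is antitone in the endpoints -/
lemma phi_antitone {a b a' b' y : ℝ} (h1 : a < b) (h2 : a' < b') (ha : a' ≤ a) (hb : b' ≤ b) :
    max (min y b - a) 0 / (b - a) ≤ max (min y b' - a') 0 / (b' - a') := by
  have hba : (0:ℝ) < b - a := by linarith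
  have hba' : (0:ℝ) < b' - a' := by linarith
  rcases le_or_gt (min y b - a) 0 with h | h
  · rw [max_eq_right h]
    rw [zero_div]
    apply div_nonneg (le_max_right _ _) (by linarith)
  · rw [max_eq_left h.le]
    have hya : a < y := by
      rcases min_le_left y b with h'; by_contra hc; push_neg at hc
      have : min y b ≤ y := min_le_left _ _; linarith
    rcases le_or_gt b y with hyb | hyb
    · -- min y b = b, LHS = 1
      rw [min_eq_right hyb]
      have hb'y : b' ≤ y := le_trans hb hyb
      rw [min_eq_right hb'y, max_eq_left (by linarith)]
      rw [div_self hba.ne', div_self hba'.ne']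
    · rw [min_eq_left hyb.le] at h ⊢
      rcases le_or_gt b' y with hb'y | hb'y
      · rw [min_eq_right hb'y, max_eq_left (by linarith), div_self hba'.ne']
        rw [div_le_one hba]; linarith
      · rw [min_eq_left hb'y.le, max_eq_left (by linarith [le_trans ha (le_of_lt hya)])]
        rw [div_le_div_iff₀ hba hba']
        nlinarith [le_trans ha hya.le]

/-- main termwise comparison -/
lemma phi_shift {p a b a' b' c y : ℝ} (hp : 0 ≤ p) (h1 : a < b) (h2 : a' < b')
    (ha : a' ≤ a + c) (hb : b' ≤ b + c) :
    p / (b - a) * max (min y b - a) 0 ≤ p / (b' - a') * max (min (y + c) b' - a') 0 := by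
  have key : max (min y b - a) 0 / (b - a) ≤ max (min (y+c) b' - a') 0 / (b' - a') := by
    have e1 : max (min y b - a) 0 / (b - a)
        = max (min (y+c) (b+c) - (a+c)) 0 / ((b+c) - (a+c)) := by
      have : min (y+c) (b+c) = min y b + c := by
        rcases le_total y b with h | h
        · rw [min_eq_left h, min_eq_left (by linarith)]
        · rw [min_eq_right h, min_eq_right (by linarith)]
      rw [this]; ring_nf
    rw [e1]
    exact phi_antitone (by linarith) h2 ha hb
  calc p / (b - a) * max (min y b - a) 0 = p * (max (min y b - a) 0 / (b - a)) := by ring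
    _ ≤ p * (max (min (y+c) b' - a') 0 / (b' - a')) := by
        exact mul_le_mul_of_nonneg_left key hp
    _ = p / (b' - a') * max (min (y + c) b' - a') 0 := by ring


/-- One-sided Gronwall: if `f' ≥ -C|f|` and `f a ≥ 0` then `f ≥ 0` on `[a,b]`. -/
lemma gronwall_sign {f f' : ℝ → ℝ} {a b C : ℝ} (hC : 0 ≤ C)
    (hf : ∀ t ∈ Icc a b, HasDerivWithinAt f (f' t) (Icc a b) t)
    (hd : ∀ t ∈ Icc a b, -C * |f t| ≤ f' t) (h0 : 0 ≤ f a) :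
    ∀ t ∈ Icc a b, 0 ≤ f t := by
  intro t₁ ht₁
  by_contra hneg
  push_neg at hneg
  have hab : a ≤ b := ht₁.1.trans ht₁.2
  have hcont : ContinuousOn f (Icc a b) := fun u hu => (hf u hu).continuousWithinAt
  have hat₁ : a < t₁ := by
    rcases eq_or_lt_of_le ht₁.1 with h | h
    · exfalso; rw [← h] at hneg; linarith
    · exact h
  set Z := Icc a t₁ ∩ f ⁻¹' Ici 0 with hZ
  have hZne : Z.Nonempty := ⟨a, ⟨le_refl a, hat₁.le⟩, h0⟩
  have hZbdd : BddAbove Z := ⟨t₁, fun u hu => hu.1.2⟩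
  have hsub : Icc a t₁ ⊆ Icc a b := Icc_subset_Icc le_rfl ht₁.2
  have hZclosed : IsClosed Z := by
    have : ContinuousOn f (Icc a t₁) := hcont.mono hsub
    exact this.preimage_isClosed_of_isClosed isClosed_Icc isClosed_Ici
  set t₀ := sSup Z with ht₀def
  have ht₀Z : t₀ ∈ Z := hZclosed.csSup_mem hZne hZbdd
  have ht₀f : 0 ≤ f t₀ := ht₀Z.2
  have ht₀t₁ : t₀ ≤ t₁ := ht₀Z.1.2
  have ht₀a : a ≤ t₀ := ht₀Z.1.1
  have ht₀lt : t₀ < t₁ := by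
    rcases eq_or_lt_of_le ht₀t₁ with h | h
    · exfalso; rw [h] at ht₀f; linarith
    · exact h
  have hfneg : ∀ u, t₀ < u → u ≤ t₁ → f u < 0 := by
    intro u hu1 hu2
    by_contra hc; push_neg at hc
    have : u ∈ Z := ⟨⟨ht₀a.trans hu1.le, hu2⟩, hc⟩
    have := le_csSup hZbdd this
    linarith
  -- the auxiliary function
  set g : ℝ → ℝ := fun u => f u * Real.exp (-C * u) with hg
  have hmono : MonotoneOn g (Icc t₀ t₁) := by
    apply monotoneOn_of_deriv_nonneg (convex_Icc _ _)
    · exact ((hcont.mono (Icc_subset_Icc (by linarith) (by exact ht₁.2))).mul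
        ((Real.continuous_exp.comp (continuous_const.mul continuous_id)).continuousOn))
    · intro u hu
      rw [interior_Icc] at hu
      have humem : u ∈ Icc a b := ⟨by linarith [hu.1], by linarith [hu.2, ht₁.2]⟩
      have hder : HasDerivAt f (f' u) u := by
        apply (hf u humem).hasDerivAt
        exact Icc_mem_nhds (by linarith [hu.1]) (by linarith [hu.2, ht₁.2])
      exact ((hder.mul ((Real.hasDerivAt_exp _).comp u
        ((hasDerivAt_id u).const_mul (-C)))).differentiableAt).differentiableWithinAt
    · intro u hu
      rw [interior_Icc] at hu
      have humem : u ∈ Icc a b := ⟨by linarith [hu.1], by linarith [hu.2, ht₁.2]⟩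
      have hder : HasDerivAt f (f' u) u := by
        apply (hf u humem).hasDerivAt
        exact Icc_mem_nhds (by linarith [hu.1]) (by linarith [hu.2, ht₁.2])
      have hexp : HasDerivAt (fun u : ℝ => Real.exp (-C * u)) (Real.exp (-C * u) * (-C)) u := by
        have := (Real.hasDerivAt_exp (-C*u)).comp u ((hasDerivAt_id u).const_mul (-C))
        simpa [Function.comp_def, mul_comm] using this
      have hgder : HasDerivAt g (f' u * Real.exp (-C * u) + f u * (Real.exp (-C * u) * (-C))) u :=
        hder.mul hexp
      rw [hgder.deriv]
      have hfu : f u < 0 := hfneg u hu.1 hu.2.le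
      have habs : |f u| = -f u := abs_of_neg hfu
      have hbound := hd u humem
      rw [habs] at hbound
      have hexppos : 0 < Real.exp (-C * u) := Real.exp_pos _
      nlinarith
  have := hmono ⟨le_rfl, ht₀lt.le⟩ ⟨ht₀lt.le, le_rfl⟩ ht₀lt.le
  have hexppos : 0 < Real.exp (-C * t₀) := Real.exp_pos _
  have hexppos1 : 0 < Real.exp (-C * t₁) := Real.exp_pos _
  have hg0 : 0 ≤ g t₀ := by positivity
  have hg1 : g t₁ < 0 := mul_neg_of_neg_of_pos hneg hexppos1
  linarith
section DevA
variable {ρmax vmax δ T : ℝ} {v v' rbar rb0 rb1 : ℝ → ℝ} {n m : ℕ}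

lemma rbar_intOn (hInt : IntegrableOn rbar (Set.Ioo 0 1)) {a b : ℝ} (h0 : 0 ≤ a) (hb1 : b ≤ 1) :
    IntegrableOn rbar (Set.Ioc a b) := by
  rw [integrableOn_Ioc_iff_integrableOn_Ioo]
  exact hInt.mono_set (fun x hx => ⟨lt_of_le_of_lt h0 hx.1, lt_of_lt_of_le hx.2 hb1⟩)

lemma int_ub (hrange : ∀ y ∈ Set.Ioo (0:ℝ) 1, rbar y ∈ Set.Icc δ ρmax)
    (hInt : IntegrableOn rbar (Set.Ioo 0 1))
    {a b : ℝ} (h0 : 0 ≤ a) (hab : a ≤ b) (hb1 : b ≤ 1) :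
    (∫ y in Set.Ioc a b, rbar y) ≤ ρmax * (b - a) := by
  rw [integral_Ioc_eq_integral_Ioo]
  have hsub : Set.Ioo a b ⊆ Set.Ioo (0:ℝ) 1 :=
    fun x hx => ⟨lt_of_le_of_lt h0 hx.1, lt_of_lt_of_le hx.2 hb1⟩
  have h1 : (∫ y in Set.Ioo a b, rbar y) ≤ ∫ _y in Set.Ioo a b, ρmax :=
    setIntegral_mono_on (hInt.mono_set hsub) ((integrableOn_const_iff).mpr (Or.inr (by
      rw [Real.volume_Ioo]; exact ENNReal.ofReal_lt_top))) measurableSet_Ioo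
      (fun x hx => (hrange x (hsub hx)).2)
  rw [setIntegral_const, measureReal_def, Real.volume_Ioo, smul_eq_mul, ENNReal.toReal_ofReal_eq_iff.mpr] at h1
  · linarith [h1]
  · linarith

lemma int_lb (hrange : ∀ y ∈ Set.Ioo (0:ℝ) 1, rbar y ∈ Set.Icc δ ρmax)
    (hInt : IntegrableOn rbar (Set.Ioo 0 1))
    {a b : ℝ} (h0 : 0 ≤ a) (hab : a ≤ b) (hb1 : b ≤ 1) :
    δ * (b - a) ≤ ∫ y in Set.Ioc a b, rbar y := by
  rw [integral_Ioc_eq_integral_Ioo]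
  have hsub : Set.Ioo a b ⊆ Set.Ioo (0:ℝ) 1 :=
    fun x hx => ⟨lt_of_le_of_lt h0 hx.1, lt_of_lt_of_le hx.2 hb1⟩
  have h1 : (∫ _y in Set.Ioo a b, δ) ≤ ∫ y in Set.Ioo a b, rbar y :=
    setIntegral_mono_on ((integrableOn_const_iff).mpr (Or.inr (by
      rw [Real.volume_Ioo]; exact ENNReal.ofReal_lt_top))) (hInt.mono_set hsub)
      measurableSet_Ioo (fun x hx => (hrange x (hsub hx)).1)
  rw [setIntegral_const, measureReal_def, Real.volume_Ioo, smul_eq_mul, ENNReal.toReal_ofReal_eq_iff.mpr] at h1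
  · linarith [h1]
  · linarith

lemma int_add (hInt : IntegrableOn rbar (Set.Ioo 0 1))
    {a b c : ℝ} (h0 : 0 ≤ a) (hab : a ≤ b) (hbc : b ≤ c) (hc1 : c ≤ 1) :
    (∫ y in Set.Ioc a c, rbar y)
      = (∫ y in Set.Ioc a b, rbar y) + (∫ y in Set.Ioc b c, rbar y) := by
  rw [← Set.Ioc_union_Ioc_eq_Ioc hab hbc]
  apply setIntegral_union _ measurableSet_Ioc
  · exact rbar_intOn hInt h0 (hbc.trans hc1)
  · exact rbar_intOn hInt (h0.trans hab) hc1
  · apply Set.disjoint_left.mpr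
    intro x hx hx2
    exact absurd hx2.1 (not_lt.mpr hx.2)

end DevA
section Dev
variable {ρmax vmax δ T : ℝ} {v v' rbar rb0 rb1 : ℝ → ℝ} {n m : ℕ}

namespace FTLibvp

lemma taupos (S : FTLibvp ρmax vmax T v rbar rb0 rb1 n m) (hT : 0 < T) (hm : 1 ≤ m) :
    0 < S.τ := by
  rw [S.hτ]; positivity

lemma Qpos (S : FTLibvp ρmax vmax T v rbar rb0 rb1 n m) (hρmax : 0 < ρmax)
    (hvmax : 0 < vmax) (hT : 0 < T) : 0 < S.Q := by
  rw [S.hQ]; positivity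

lemma lpos (S : FTLibvp ρmax vmax T v rbar rb0 rb1 n m) (hρmax : 0 < ρmax) (hδ : 0 < δ)
    (hT : 0 < T) (hn : 1 ≤ n) (hm : 1 ≤ m)
    (hrbar_range : ∀ y ∈ Set.Ioo (0:ℝ) 1, rbar y ∈ Set.Icc δ ρmax) : 0 < S.ℓ := by
  by_contra h
  push_neg at h
  have h1 := S.initpos 1 le_rfl (by exact_mod_cast hn)
  have hempty : {y : ℝ | y ∈ Set.Ioo (0:ℝ) 1 ∧ (∫ s in Set.Ioc (S.xbar (1-1)) y, rbar s) < S.ℓ}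
      = ∅ := by
    ext y
    simp only [Set.mem_setOf_eq, Set.mem_empty_iff_false, iff_false, not_and]
    intro hy hlt
    have h0' : (1:ℤ) - 1 = 0 := by norm_num
    rw [h0', S.init0] at hlt
    have hnn : 0 ≤ ∫ s in Set.Ioc (0:ℝ) y, rbar s := by
      apply setIntegral_nonneg measurableSet_Ioc
      intro x hx
      exact le_trans hδ.le (hrbar_range x ⟨hx.1, lt_of_le_of_lt hx.2 hy.2⟩).1
    linarith
  rw [hempty, Real.sSup_empty] at h1
  have horder := S.order 0 hm 0 (by
    constructor
    · simp
    · have := S.taupos hT hm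
      simp only [Nat.cast_zero, zero_mul, zero_add, one_mul]
      linarith) 0 (by simp) (by
      have : (1:ℤ) ≤ (n:ℤ) := by exact_mod_cast hn
      omega)
  norm_num at horder
  rw [S.ic 0 (by omega) (by positivity), S.ic 1 (by omega) (by exact_mod_cast hn)] at horder
  rw [S.init0, h1] at horder
  simp at horder

lemma Lpos (S : FTLibvp ρmax vmax T v rbar rb0 rb1 n m) (hρmax : 0 < ρmax) (hδ : 0 < δ)
    (hT : 0 < T) (hn : 1 ≤ n) (hm : 1 ≤ m)
    (hrbar_range : ∀ y ∈ Set.Ioo (0:ℝ) 1, rbar y ∈ Set.Icc δ ρmax) : 0 < S.L := by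
  have := S.lpos hρmax hδ hT hn hm hrbar_range
  rw [S.hℓ] at this
  by_contra h
  push_neg at h
  have hn' : (0:ℝ) < n := by exact_mod_cast hn
  have : S.L / n ≤ 0 := div_nonpos_of_nonpos_of_nonneg h hn'.le
  linarith

lemma Leq (S : FTLibvp ρmax vmax T v rbar rb0 rb1 n m) (hn : 1 ≤ n) :
    S.L = n * S.ℓ := by
  rw [S.hℓ]
  field_simp

lemma Npos (S : FTLibvp ρmax vmax T v rbar rb0 rb1 n m) (hρmax : 0 < ρmax) (hδ : 0 < δ)
    (hvmax : 0 < vmax) (hT : 0 < T) (hn : 1 ≤ n) (hm : 1 ≤ m)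
    (hrbar_range : ∀ y ∈ Set.Ioo (0:ℝ) 1, rbar y ∈ Set.Icc δ ρmax) : 1 ≤ S.N := by
  rw [S.hN]
  rw [Nat.one_le_ceil_iff]
  exact div_pos (S.Qpos hρmax hvmax hT) (S.lpos hρmax hδ hT hn hm hrbar_range)

lemma qpos (S : FTLibvp ρmax vmax T v rbar rb0 rb1 n m) (hρmax : 0 < ρmax) (hδ : 0 < δ)
    (hvmax : 0 < vmax) (hT : 0 < T) (hn : 1 ≤ n) (hm : 1 ≤ m)
    (hrbar_range : ∀ y ∈ Set.Ioo (0:ℝ) 1, rbar y ∈ Set.Icc δ ρmax) : 0 < S.q := by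
  have hl := S.lpos hρmax hδ hT hn hm hrbar_range
  have hQ := S.Qpos hρmax hvmax hT
  rw [S.hq, S.hN]
  have h1 : (⌈S.Q / S.ℓ⌉₊ : ℝ) < S.Q / S.ℓ + 1 := Nat.ceil_lt_add_one (by positivity)
  have h2 : S.ℓ * ((⌈S.Q / S.ℓ⌉₊ : ℝ) - 1) < S.ℓ * (S.Q / S.ℓ) := by
    apply mul_lt_mul_of_pos_left _ hl
    linarith
  rw [mul_div_cancel₀ _ hl.ne'] at h2
  linarith

lemma pmass_pos (S : FTLibvp ρmax vmax T v rbar rb0 rb1 n m) (hρmax : 0 < ρmax) (hδ : 0 < δ)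
    (hvmax : 0 < vmax) (hT : 0 < T) (hn : 1 ≤ n) (hm : 1 ≤ m)
    (hrbar_range : ∀ y ∈ Set.Ioo (0:ℝ) 1, rbar y ∈ Set.Icc δ ρmax) (i : ℤ) :
    0 < pmass S.q S.ℓ S.N i := by
  unfold pmass
  split
  · exact S.qpos hρmax hδ hvmax hT hn hm hrbar_range
  · exact S.lpos hρmax hδ hT hn hm hrbar_range

lemma rbar_int (S : FTLibvp ρmax vmax T v rbar rb0 rb1 n m) (hρmax : 0 < ρmax) (hδ : 0 < δ)
    (hT : 0 < T) (hn : 1 ≤ n) (hm : 1 ≤ m)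
    (hrbar_range : ∀ y ∈ Set.Ioo (0:ℝ) 1, rbar y ∈ Set.Icc δ ρmax) :
    IntegrableOn rbar (Set.Ioo 0 1) := by
  by_contra h
  have := S.Lpos hρmax hδ hT hn hm hrbar_range
  rw [S.hL, integral_undef h] at this
  linarith

end FTLibvp
end Dev
section DevA2
variable {ρmax vmax δ T : ℝ} {v v' rbar rb0 rb1 : ℝ → ℝ} {n m : ℕ}

namespace FTLibvp

lemma initseq (S : FTLibvp ρmax vmax T v rbar rb0 rb1 n m) (hρmax : 0 < ρmax) (hδ : 0 < δ)
    (hvmax : 0 < vmax) (hT : 0 < T) (hn : 1 ≤ n) (hm : 1 ≤ m)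
    (hrange : ∀ y ∈ Set.Ioo (0:ℝ) 1, rbar y ∈ Set.Icc δ ρmax) :
    ∀ j : ℕ, j ≤ n → 0 ≤ S.xbar (j:ℤ) ∧ S.xbar (j:ℤ) ≤ 1 ∧
      (∫ y in Set.Ioc (0:ℝ) (S.xbar (j:ℤ)), rbar y) = j * S.ℓ ∧
      (∀ i : ℕ, i + 1 = j → S.ℓ ≤ ρmax * (S.xbar (j:ℤ) - S.xbar (i:ℤ))) := by
  have hl : 0 < S.ℓ := S.lpos hρmax hδ hT hn hm hrange
  have hInt : IntegrableOn rbar (Set.Ioo 0 1) := S.rbar_int hρmax hδ hT hn hm hrange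
  have hLeq : S.L = n * S.ℓ := S.Leq hn
  have htot : (∫ y in Set.Ioc (0:ℝ) 1, rbar y) = n * S.ℓ := by
    rw [integral_Ioc_eq_integral_Ioo, ← S.hL, hLeq]
  intro j
  induction j with
  | zero =>
    intro _
    refine ⟨by rw [Int.natCast_zero, S.init0], by rw [Int.natCast_zero, S.init0]; norm_num, ?_, ?_⟩
    · rw [Int.natCast_zero, S.init0]; simp
    · intro i hi; omega
  | succ j ih =>
    intro hjn
    obtain ⟨ha0, ha1, haint, _⟩ := ih (by omega)
    set a := S.xbar (j:ℤ) with hadef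
    -- remaining mass to the right of a
    have hrem : (∫ y in Set.Ioc a 1, rbar y) = ((n:ℝ) - j) * S.ℓ := by
      have := int_add hInt (le_refl (0:ℝ)) ha0 ha1 le_rfl
      rw [htot, haint] at this
      linarith
    have hnj : (1:ℝ) ≤ (n:ℝ) - j := by
      have : (j:ℝ) + 1 ≤ n := by exact_mod_cast hjn
      linarith
    have halt1 : a < 1 := by
      rcases lt_or_eq_of_le ha1 with h | h
      · exact h
      · exfalso
        rw [h] at hrem
        simp only [Set.Ioc_self, Measure.restrict_empty, integral_zero_measure] at hrem
        nlinarith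
    -- the defining sSup
    have hxb := S.initpos ((j:ℤ)+1) (by omega) (by exact_mod_cast hjn)
    have hcast : ((j:ℤ) + 1) - 1 = (j:ℤ) := by ring
    rw [hcast] at hxb
    set Sset := {y : ℝ | y ∈ Set.Ioo (0:ℝ) 1 ∧ (∫ s in Set.Ioc a y, rbar s) < S.ℓ} with hSdef
    -- a convenient element
    set y₀ := (a + min (a + S.ℓ/ρmax) 1)/2 with hy₀def
    have hmin1 : a < min (a + S.ℓ/ρmax) 1 := by
      apply lt_min
      · have : 0 < S.ℓ/ρmax := by positivity
        linarith
      · exact halt1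
    have hy₀a : a < y₀ := by
      rw [hy₀def]; linarith
    have hy₀lt : y₀ < min (a + S.ℓ/ρmax) 1 := by
      rw [hy₀def]; linarith
    have hy₀1 : y₀ < 1 := lt_of_lt_of_le hy₀lt (min_le_right _ _)
    have hy₀0 : 0 < y₀ := lt_of_le_of_lt ha0 hy₀a
    have hy₀mem : y₀ ∈ Sset := by
      refine ⟨⟨hy₀0, hy₀1⟩, ?_⟩
      have h1 : (∫ s in Set.Ioc a y₀, rbar s) ≤ ρmax * (y₀ - a) :=
        int_ub hrange hInt ha0 hy₀a.le hy₀1.le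
      have h2 : y₀ < a + S.ℓ/ρmax := lt_of_lt_of_le hy₀lt (min_le_left _ _)
      have : ρmax * (y₀ - a) < ρmax * (S.ℓ/ρmax) := by
        apply mul_lt_mul_of_pos_left _ hρmax
        linarith
      rw [mul_div_cancel₀ _ hρmax.ne'] at this
      linarith
    have hSne : Sset.Nonempty := ⟨y₀, hy₀mem⟩
    have hSbdd : BddAbove Sset := ⟨1, fun y hy => hy.1.2.le⟩
    set b := S.xbar ((j:ℤ)+1) with hbdef
    have hbsup : b = sSup Sset := hxb
    have hb1 : b ≤ 1 := by
      rw [hbsup]; exact csSup_le hSne (fun y hy => hy.1.2.le)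
    have hby₀ : y₀ ≤ b := by
      rw [hbsup]; exact le_csSup hSbdd hy₀mem
    have hab : a < b := lt_of_lt_of_le hy₀a hby₀
    have hb0 : 0 < b := lt_of_lt_of_le hy₀0 hby₀
    -- F b ≤ ℓ
    have hkey : ∀ y ∈ Sset, (∫ s in Set.Ioc a b, rbar s)
        ≤ (∫ s in Set.Ioc a y, rbar s) + ρmax * (b - y) := by
      intro y hy
      have hyb : y ≤ b := by rw [hbsup]; exact le_csSup hSbdd hy
      rcases le_or_gt a y with hay | hay
      · have hadd := int_add hInt ha0 hay hyb hb1
        have hub := int_ub hrange hInt (ha0.trans hay) hyb hb1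
        linarith
      · have h0 : (∫ s in Set.Ioc a y, rbar s) = 0 := by
          rw [Set.Ioc_eq_empty (not_lt.mpr hay.le)]
          simp
        have hub := int_ub hrange hInt ha0 hab.le hb1
        rw [h0]
        have : ρmax * (b - a) ≤ ρmax * (b - y) := by
          apply mul_le_mul_of_nonneg_left _ hρmax.le
          linarith
        linarith
    have hFble : (∫ s in Set.Ioc a b, rbar s) ≤ S.ℓ := by
      by_contra hcon
      push_neg at hcon
      set β := b - ((∫ s in Set.Ioc a b, rbar s) - S.ℓ)/ρmax with hβdef
      have hβb : β < b := by
        rw [hβdef]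
        have : 0 < ((∫ s in Set.Ioc a b, rbar s) - S.ℓ)/ρmax := by
          apply div_pos _ hρmax
          linarith
        linarith
      obtain ⟨y, hymem, hβy⟩ := exists_lt_of_lt_csSup hSne (by rw [← hbsup]; exact hβb)
      have h1 := hkey y hymem
      have h2 : ρmax * (b - y) < ρmax * (b - β) := by
        apply mul_lt_mul_of_pos_left _ hρmax
        linarith
      have h3 : ρmax * (b - β) = (∫ s in Set.Ioc a b, rbar s) - S.ℓ := by
        rw [hβdef]
        field_simp
        ring
      have h4 := hymem.2
      linarith
    -- F b = ℓ
    have hFbeq : (∫ s in Set.Ioc a b, rbar s) = S.ℓ := by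
      rcases lt_or_eq_of_le hb1 with hblt | hbeq
      · by_contra hne
        have hFlt : (∫ s in Set.Ioc a b, rbar s) < S.ℓ := lt_of_le_of_ne hFble hne
        set y' := min ((b+1)/2) (b + (S.ℓ - (∫ s in Set.Ioc a b, rbar s))/(2*ρmax)) with hy'def
        have hy'b : b < y' := by
          apply lt_min
          · linarith
          · have : 0 < (S.ℓ - (∫ s in Set.Ioc a b, rbar s))/(2*ρmax) := by
              apply div_pos (by linarith) (by linarith)
            linarith
        have hy'1 : y' < 1 := lt_of_le_of_lt (min_le_left _ _) (by linarith)
        have hy'mem : y' ∈ Sset := by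
          refine ⟨⟨lt_trans hb0 hy'b, hy'1⟩, ?_⟩
          have hadd := int_add hInt ha0 hab.le hy'b.le hy'1.le
          have hub := int_ub hrange hInt (ha0.trans hab.le) hy'b.le hy'1.le
          have hle : y' - b ≤ (S.ℓ - (∫ s in Set.Ioc a b, rbar s))/(2*ρmax) := by
            have := min_le_right ((b+1)/2) (b + (S.ℓ - (∫ s in Set.Ioc a b, rbar s))/(2*ρmax))
            rw [← hy'def] at this
            linarith
          have h5 : ρmax * (y' - b) ≤ ρmax * ((S.ℓ - (∫ s in Set.Ioc a b, rbar s))/(2*ρmax)) :=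
            mul_le_mul_of_nonneg_left hle hρmax.le
          have h6 : ρmax * ((S.ℓ - (∫ s in Set.Ioc a b, rbar s))/(2*ρmax))
              = (S.ℓ - (∫ s in Set.Ioc a b, rbar s))/2 := by
            field_simp
          linarith
        have : y' ≤ b := by rw [hbsup]; exact le_csSup hSbdd hy'mem
        linarith
      · -- b = 1
        rw [hbeq] at hFble ⊢
        rw [hrem] at hFble ⊢
        nlinarith
    -- assemble
    have hfull : (∫ y in Set.Ioc (0:ℝ) b, rbar y) = ((j:ℝ)+1) * S.ℓ := by
      have hadd2 := int_add hInt (le_refl (0:ℝ)) ha0 hab.le hb1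
      rw [haint, hFbeq] at hadd2
      rw [hadd2]; ring
    have hgap : S.ℓ ≤ ρmax * (b - a) := by
      have := int_ub hrange hInt ha0 hab.le hb1
      linarith
    refine ⟨?_, ?_, ?_, ?_⟩
    · push_cast
      exact hb0.le
    · push_cast
      exact hb1
    · push_cast
      rw [← hbdef, hfull]
    · intro i hi
      have hij : i = j := by omega
      subst hij
      push_cast
      rw [← hbdef, ← hadef]
      linarith [hgap]

end FTLibvp
end DevA2
section DevA3
variable {ρmax vmax δ T : ℝ} {v v' rbar rb0 rb1 : ℝ → ℝ} {n m : ℕ}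

namespace FTLibvp

lemma goodInit (S : FTLibvp ρmax vmax T v rbar rb0 rb1 n m) (hρmax : 0 < ρmax) (hδ : 0 < δ)
    (hvmax : 0 < vmax) (hT : 0 < T) (hn : 1 ≤ n) (hm : 1 ≤ m)
    (hrange : ∀ y ∈ Set.Ioo (0:ℝ) 1, rbar y ∈ Set.Icc δ ρmax)
    (hb0_range : ∀ t, 0 ≤ t → rb0 t ∈ Set.Icc δ ρmax) :
    ∀ i : ℤ, -(S.N:ℤ) ≤ i → i ≤ (n:ℤ) - 1 →
      pmass S.q S.ℓ S.N i ≤ ρmax * (S.xbar (i+1) - S.xbar i) := by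
  have hl : 0 < S.ℓ := S.lpos hρmax hδ hT hn hm hrange
  have hq : 0 < S.q := S.qpos hρmax hδ hvmax hT hn hm hrange
  have hN : 1 ≤ S.N := S.Npos hρmax hδ hvmax hT hn hm hrange
  have hr := hb0_range 0 le_rfl
  have hrpos : 0 < rb0 0 := lt_of_lt_of_le hδ hr.1
  intro i hiN hin
  rcases eq_or_lt_of_le hiN with hiN' | hiN'
  · -- i = -N
    rw [← hiN']
    have hgap := S.initlast
    have : S.xbar (-(S.N:ℤ) + 1) - S.xbar (-(S.N:ℤ)) = S.q / rb0 0 := by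
      rw [hgap]; ring
    rw [this]
    have hkey : rb0 0 * (S.q / rb0 0) = S.q := mul_div_cancel₀ _ hrpos.ne'
    have hdiv : 0 ≤ S.q / rb0 0 := by positivity
    have hpm : pmass S.q S.ℓ S.N (-(S.N:ℤ)) = S.q := by unfold pmass; simp
    rw [hpm]
    nlinarith [mul_le_mul_of_nonneg_right hr.2 hdiv]
  · -- i ≥ -N + 1
    have hiN1 : -(S.N:ℤ) + 1 ≤ i := by omega
    have hpm : pmass S.q S.ℓ S.N i = S.ℓ := by
      unfold pmass
      rw [if_neg (by omega)]
    rw [hpm]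
    rcases le_or_gt i (-1) with hineg | hipos
    · -- queue particles
      have hxi := S.initqueue i hiN1 hineg
      have hxi1 : S.xbar (i+1) = ((i:ℝ)+1) * (S.ℓ / rb0 0) := by
        rcases eq_or_lt_of_le hineg with h | h
        · rw [h]
          norm_num [S.init0]
        · have := S.initqueue (i+1) (by omega) (by omega)
          rw [this]
          push_cast
          ring
      have hgap : S.xbar (i+1) - S.xbar i = S.ℓ / rb0 0 := by
        rw [hxi, hxi1]; ring
      rw [hgap]
      have hkey : rb0 0 * (S.ℓ / rb0 0) = S.ℓ := mul_div_cancel₀ _ hrpos.ne'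
      have hdiv : 0 ≤ S.ℓ / rb0 0 := by positivity
      nlinarith [mul_le_mul_of_nonneg_right hr.2 hdiv]
    · -- interior particles: i ≥ 0
      have hi0 : 0 ≤ i := by omega
      set j := i.toNat with hjdef
      have hij : (j:ℤ) = i := Int.toNat_of_nonneg hi0
      have hjn : j + 1 ≤ n := by omega
      obtain ⟨_, _, _, hgap⟩ := S.initseq hρmax hδ hvmax hT hn hm hrange (j+1) hjn
      have := hgap j rfl
      have hcast : ((j+1:ℕ):ℤ) = i + 1 := by omega
      rw [hcast, hij] at this
      linarith
end FTLibvp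
end DevA3
section DevB1
variable {ρmax vmax δ T : ℝ} {v v' rbar rb0 rb1 : ℝ → ℝ} {n m : ℕ}

lemma v_ub (hρmax : 0 < ρmax)
    (hv_deriv : ∀ r ∈ Set.Icc (0:ℝ) ρmax, HasDerivAt v (v' r) r)
    (hv'_cont : ContinuousOn v' (Set.Icc (0:ℝ) ρmax)) (hvρmax : v ρmax = 0) :
    ∃ K, 0 ≤ K ∧ ∀ r ∈ Set.Icc (0:ℝ) ρmax, v r ≤ K * (ρmax - r) := by
  obtain ⟨C, hC⟩ := isCompact_Icc.exists_bound_of_continuousOn hv'_cont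
  refine ⟨max C 0, le_max_right _ _, ?_⟩
  intro r hr
  have key := norm_image_sub_le_of_norm_deriv_le_segment'
    (f := v) (f' := v') (a := r) (b := ρmax) (C := max C 0)
    (fun x hx => (hv_deriv x ⟨le_trans hr.1 hx.1, hx.2⟩).hasDerivWithinAt)
    (fun x hx => le_trans (hC x ⟨le_trans hr.1 hx.1, hx.2.le⟩) (le_max_left _ _))
    ρmax (right_mem_Icc.mpr hr.2)
  rw [hvρmax] at key
  have : |v r| ≤ max C 0 * (ρmax - r) := by
    rw [← abs_neg]
    simpa using key
  linarith [neg_abs_le (v r), le_abs_self (v r)]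

lemma v_near (hρmax : 0 < ρmax)
    (hv_deriv : ∀ r ∈ Set.Icc (0:ℝ) ρmax, HasDerivAt v (v' r) r) (hvρmax : v ρmax = 0) :
    ∃ δ₀ C₀ : ℝ, 0 < δ₀ ∧ 0 ≤ C₀ ∧
      ∀ r, ρmax ≤ r → r ≤ ρmax + δ₀ → |v r| ≤ C₀ * (r - ρmax) := by
  have h := hv_deriv ρmax (Set.right_mem_Icc.mpr hρmax.le)
  have h2 := (hasDerivAt_iff_isLittleO.mp h).def one_pos
  rw [Metric.eventually_nhds_iff] at h2
  obtain ⟨ε, hε, hball⟩ := h2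
  refine ⟨ε/2, 1 + |v' ρmax|, by positivity, by positivity, ?_⟩
  intro r hr1 hr2
  have hd : dist r ρmax < ε := by
    rw [Real.dist_eq, abs_of_nonneg (by linarith)]
    linarith
  have := hball hd
  rw [hvρmax] at this
  simp only [smul_eq_mul, one_mul, sub_zero] at this
  have h3 : ‖v r - (r - ρmax) * v' ρmax‖ ≤ ‖r - ρmax‖ := this
  rw [Real.norm_eq_abs, Real.norm_eq_abs, abs_of_nonneg (by linarith : (0:ℝ) ≤ r - ρmax)] at h3
  calc |v r| ≤ |v r - (r - ρmax) * v' ρmax| + |(r - ρmax) * v' ρmax| := by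
        have := abs_add_le (v r - (r - ρmax) * v' ρmax) ((r - ρmax) * v' ρmax)
        simpa using this
    _ ≤ (r - ρmax) + (r - ρmax) * |v' ρmax| := by
        have : |(r - ρmax) * v' ρmax| = (r - ρmax) * |v' ρmax| := by
          rw [abs_mul, abs_of_nonneg (by linarith : (0:ℝ) ≤ r - ρmax)]
        linarith [h3, this.le]
    _ = (1 + |v' ρmax|) * (r - ρmax) := by ring

/-- The core pointwise estimate for the maximum principle. -/
lemma Vbound_calc {K C₀ ρmax δ₀ p G vr : ℝ} (hρ : 0 < ρmax) (hδ₀ : 0 < δ₀) (hp : 0 < p)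
    (hK : 0 ≤ K) (hC₀ : 0 ≤ C₀) (hG' : p ≤ (ρmax + δ₀) * G)
    (h1 : 0 ≤ p/G → p/G ≤ ρmax → vr ≤ K * (ρmax - p/G))
    (h2 : ρmax ≤ p/G → |vr| ≤ C₀ * (p/G - ρmax)) :
    vr ≤ ((K*ρmax + C₀*(ρmax+δ₀)) * ρmax / p) * |G - p/ρmax| := by
  have hG : 0 < G := by nlinarith
  rcases le_total (p/ρmax) G with hc | hc
  · -- G above μ : r ≤ ρmax
    have hA : p ≤ ρmax * G := by
      have := mul_le_mul_of_nonneg_left hc hρ.le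
      rw [mul_div_cancel₀ _ hρ.ne'] at this
      linarith
    have hr1 : p / G ≤ ρmax := by
      rw [div_le_iff₀ hG]
      linarith
    have hv1 := h1 (by positivity) hr1
    have habs : |G - p/ρmax| = G - p/ρmax := abs_of_nonneg (by linarith)
    rw [habs]
    have key : K * (ρmax - p/G) ≤ ((K*ρmax) * ρmax / p) * (G - p/ρmax) := by
      rw [div_mul_eq_mul_div, le_div_iff₀ hp]
      have hKA : K*p*(ρmax*G - p) ≤ K*(ρmax*G)*(ρmax*G - p) :=
        mul_le_mul_of_nonneg_right (mul_le_mul_of_nonneg_left hA hK) (by linarith)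
      have eL : K*(ρmax - p/G)*p*G = K*p*(ρmax*G - p) := by field_simp
      have eR : K*ρmax*ρmax*(G - p/ρmax)*G = K*(ρmax*G)*(ρmax*G - p) := by field_simp
      have hfin : K*(ρmax - p/G)*p*G ≤ K*ρmax*ρmax*(G - p/ρmax)*G := by
        rw [eL, eR]; exact hKA
      exact le_of_mul_le_mul_right hfin hG
    have haux : 0 ≤ (C₀*(ρmax+δ₀)) * ρmax / p * (G - p/ρmax) := by
      apply mul_nonneg (by positivity)
      linarith
    calc vr ≤ K * (ρmax - p/G) := hv1
      _ ≤ ((K*ρmax) * ρmax / p) * (G - p/ρmax) := key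
      _ ≤ ((K*ρmax + C₀*(ρmax+δ₀)) * ρmax / p) * (G - p/ρmax) := by
          have : ((K*ρmax + C₀*(ρmax+δ₀)) * ρmax / p) * (G - p/ρmax)
              = ((K*ρmax) * ρmax / p) * (G - p/ρmax)
                + ((C₀*(ρmax+δ₀)) * ρmax / p) * (G - p/ρmax) := by ring
          linarith
  · -- G below μ : r ≥ ρmax
    have hr1 : ρmax ≤ p / G := by
      rw [le_div_iff₀ hG]
      calc ρmax * G ≤ ρmax * (p/ρmax) := by nlinarith
        _ = p := by field_simp
    have hv2 := h2 hr1
    have habs : |G - p/ρmax| = p/ρmax - G := by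
      rw [abs_of_nonpos (by linarith)]; ring
    rw [habs]
    have key : C₀ * (p/G - ρmax) ≤ ((C₀*(ρmax+δ₀)) * ρmax / p) * (p/ρmax - G) := by
      have hμ' : p/(ρmax+δ₀) ≤ G := by
        rw [div_le_iff₀ (by linarith)]
        linarith [hG']
      have e1 : C₀ * (p/G - ρmax) * (G * p * ρmax) = C₀ * p * ρmax * (p - ρmax * G) := by
        field_simp
      have e2 : ((C₀*(ρmax+δ₀)) * ρmax / p) * (p/ρmax - G) * (G * p * ρmax)
          = C₀ * (ρmax+δ₀) * G * ρmax * (p - ρmax * G) := by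
        field_simp
      have hpos : 0 < G * p * ρmax := by positivity
      have hfac : 0 ≤ p - ρmax * G := by
        have : ρmax * G ≤ ρmax * (p/ρmax) := by nlinarith
        rw [mul_div_cancel₀ _ hρ.ne'] at this
        linarith
      have hcoeff : C₀ * p ≤ C₀ * (ρmax+δ₀) * G := by nlinarith
      have hmain : C₀ * p * ρmax * (p - ρmax * G)
          ≤ C₀ * (ρmax+δ₀) * G * ρmax * (p - ρmax * G) := by
        have h6 := mul_le_mul_of_nonneg_right hcoeff (mul_nonneg hρ.le hfac)
        nlinarith [h6]
      have hfin : C₀ * (p/G - ρmax) * (G * p * ρmax)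
          ≤ ((C₀*(ρmax+δ₀)) * ρmax / p) * (p/ρmax - G) * (G * p * ρmax) := by
        rw [e1, e2]; exact hmain
      exact le_of_mul_le_mul_right hfin hpos
    calc vr ≤ |vr| := le_abs_self _
      _ ≤ C₀ * (p/G - ρmax) := hv2
      _ ≤ ((C₀*(ρmax+δ₀)) * ρmax / p) * (p/ρmax - G) := key
      _ ≤ ((K*ρmax + C₀*(ρmax+δ₀)) * ρmax / p) * (p/ρmax - G) := by
          have h4 : 0 ≤ p/ρmax - G := by linarith
          have : ((K*ρmax + C₀*(ρmax+δ₀)) * ρmax / p) * (p/ρmax - G)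
              = ((K*ρmax) * ρmax / p) * (p/ρmax - G)
                + ((C₀*(ρmax+δ₀)) * ρmax / p) * (p/ρmax - G) := by ring
          have h5 : 0 ≤ ((K*ρmax) * ρmax / p) * (p/ρmax - G) := by positivity
          linarith

end DevB1
section DevB2
variable {ρmax vmax δ T : ℝ} {v v' rbar rb0 rb1 : ℝ → ℝ} {n m : ℕ}

namespace FTLibvp

set_option maxHeartbeats 2000000 in
lemma goodInterval (S : FTLibvp ρmax vmax T v rbar rb0 rb1 n m)
    (hρmax : 0 < ρmax) (hδ : 0 < δ) (hvmax : 0 < vmax) (hT : 0 < T) (hn : 1 ≤ n) (hm : 1 ≤ m)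
    (hv_deriv : ∀ r ∈ Set.Icc (0:ℝ) ρmax, HasDerivAt v (v' r) r)
    (hv'_cont : ContinuousOn v' (Set.Icc (0:ℝ) ρmax))
    (hv_range : ∀ r ∈ Set.Icc (0:ℝ) ρmax, v r ∈ Set.Icc (0:ℝ) vmax)
    (hvρmax : v ρmax = 0)
    (hrange : ∀ y ∈ Set.Ioo (0:ℝ) 1, rbar y ∈ Set.Icc δ ρmax)
    (hb1_range : ∀ t, 0 ≤ t → rb1 t ∈ Set.Icc δ ρmax)
    (k : ℕ) (hk : k < m)
    (hstart : ∀ i : ℤ, -(S.N:ℤ) ≤ i → i ≤ (n:ℤ)-1 →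
      pmass S.q S.ℓ S.N i ≤ ρmax * (S.x k (i+1) ((k:ℝ)*S.τ) - S.x k i ((k:ℝ)*S.τ))) :
    ∀ t ∈ Set.Icc ((k:ℝ)*S.τ) (((k:ℝ)+1)*S.τ), ∀ i : ℤ, -(S.N:ℤ) ≤ i → i ≤ (n:ℤ)-1 →
      pmass S.q S.ℓ S.N i ≤ ρmax * (S.x k (i+1) t - S.x k i t) := by
  obtain ⟨K, hK0, hKb⟩ := v_ub hρmax hv_deriv hv'_cont hvρmax
  obtain ⟨δ₀, C₀, hδ₀, hC₀, hnear⟩ := v_near hρmax hv_deriv hvρmax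
  have hτ : 0 < S.τ := S.taupos hT hm
  have ha0 : (0:ℝ) ≤ (k:ℝ)*S.τ := by positivity
  have hab : (k:ℝ)*S.τ ≤ ((k:ℝ)+1)*S.τ := by nlinarith
  have hppos : ∀ i : ℤ, 0 < pmass S.q S.ℓ S.N i := fun i =>
    S.pmass_pos hρmax hδ hvmax hT hn hm hrange i
  set V : ℤ → ℝ → ℝ := fun i t => if i = (n:ℤ) then v (rb1 ((k:ℝ)*S.τ))
    else v (pmass S.q S.ℓ S.N i / (S.x k (i+1) t - S.x k i t)) with hVdef
  have hVi : ∀ i : ℤ, i ≠ (n:ℤ) → ∀ t : ℝ,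
      V i t = v (pmass S.q S.ℓ S.N i / (S.x k (i+1) t - S.x k i t)) := by
    intro i hi t; rw [hVdef]; simp only [if_neg hi]
  have hVn : ∀ t : ℝ, V (n:ℤ) t = v (rb1 ((k:ℝ)*S.τ)) := by
    intro t; rw [hVdef]; simp
  have hVder : ∀ i : ℤ, -(S.N:ℤ) ≤ i → i ≤ (n:ℤ)-1 →
      ∀ t ∈ Set.Icc ((k:ℝ)*S.τ) (((k:ℝ)+1)*S.τ),
      HasDerivWithinAt (fun u => S.x k (i+1) u - S.x k i u) (V (i+1) t - V i t)
        (Set.Icc ((k:ℝ)*S.τ) (((k:ℝ)+1)*S.τ)) t := by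
    intro i h1 h2 t ht
    have hxi : HasDerivWithinAt (S.x k i) (V i t)
        (Set.Icc ((k:ℝ)*S.τ) (((k:ℝ)+1)*S.τ)) t := by
      rw [hVi i (by omega)]
      exact S.ode k hk i h1 h2 t ht
    have hxi1 : HasDerivWithinAt (S.x k (i+1)) (V (i+1) t)
        (Set.Icc ((k:ℝ)*S.τ) (((k:ℝ)+1)*S.τ)) t := by
      rcases eq_or_lt_of_le (show i+1 ≤ (n:ℤ) by omega) with he | hlt
      · rw [he, hVn]
        exact S.odeLead k hk t ht
      · rw [hVi (i+1) (by omega)]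
        exact S.ode k hk (i+1) (by omega) (by omega) t ht
    exact hxi1.sub hxi
  have hVnonneg : ∀ i : ℤ, -(S.N:ℤ) ≤ i → i ≤ (n:ℤ) → ∀ t : ℝ,
      (i ≤ (n:ℤ)-1 → pmass S.q S.ℓ S.N i ≤ ρmax * (S.x k (i+1) t - S.x k i t)) →
      0 ≤ V i t := by
    intro i h1 h2 t hgood
    rcases eq_or_lt_of_le h2 with he | hlt
    · rw [he, hVn]
      have hb := hb1_range _ ha0
      exact (hv_range _ ⟨le_trans hδ.le hb.1, hb.2⟩).1
    · have hg := hgood (by omega)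
      have hgpos : 0 < S.x k (i+1) t - S.x k i t := by nlinarith [hppos i]
      rw [hVi i (by omega)]
      refine (hv_range _ ⟨le_of_lt (div_pos (hppos i) hgpos), ?_⟩).1
      rw [div_le_iff₀ hgpos]
      linarith [hg]
  -- scalar Gronwall application
  have core : ∀ c ∈ Set.Icc ((k:ℝ)*S.τ) (((k:ℝ)+1)*S.τ),
      (∀ t ∈ Set.Icc ((k:ℝ)*S.τ) c, ∀ i : ℤ, -(S.N:ℤ) ≤ i → i ≤ (n:ℤ)-1 →
        pmass S.q S.ℓ S.N i ≤ (ρmax+δ₀) * (S.x k (i+1) t - S.x k i t)) →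
      ∀ i : ℤ, -(S.N:ℤ) ≤ i → i ≤ (n:ℤ)-1 →
      (∀ t ∈ Set.Icc ((k:ℝ)*S.τ) c, 0 ≤ V (i+1) t) →
      ∀ t ∈ Set.Icc ((k:ℝ)*S.τ) c,
        pmass S.q S.ℓ S.N i ≤ ρmax * (S.x k (i+1) t - S.x k i t) := by
    intro c hc hm' i h1 h2 hnext
    have hp := hppos i
    have hsub : Set.Icc ((k:ℝ)*S.τ) c ⊆ Set.Icc ((k:ℝ)*S.τ) (((k:ℝ)+1)*S.τ) :=
      Set.Icc_subset_Icc le_rfl hc.2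
    have hgron := gronwall_sign
      (f := fun t => S.x k (i+1) t - S.x k i t - pmass S.q S.ℓ S.N i / ρmax)
      (f' := fun t => V (i+1) t - V i t) (a := (k:ℝ)*S.τ) (b := c)
      (C := (K*ρmax + C₀*(ρmax+δ₀)) * ρmax / pmass S.q S.ℓ S.N i)
      (div_nonneg (mul_nonneg (by nlinarith) hρmax.le) (hppos i).le)
      (fun t ht => ((hVder i h1 h2 t (hsub ht)).mono hsub).sub_const _)
      ?_ ?_
    · intro t ht
      have := hgron t ht
      have h5 : pmass S.q S.ℓ S.N i / ρmax ≤ S.x k (i+1) t - S.x k i t := by linarith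
      rw [div_le_iff₀ hρmax] at h5
      linarith [h5]
    · -- derivative bound
      intro t ht
      have hnn := hnext t ht
      have hGb := hm' t ht i h1 h2
      have hVb : V i t ≤ ((K*ρmax + C₀*(ρmax+δ₀)) * ρmax / pmass S.q S.ℓ S.N i) *
          |S.x k (i+1) t - S.x k i t - pmass S.q S.ℓ S.N i / ρmax| := by
        rw [hVi i (by omega)]
        have := Vbound_calc (K := K) (C₀ := C₀) (ρmax := ρmax) (δ₀ := δ₀)
          (p := pmass S.q S.ℓ S.N i) (G := S.x k (i+1) t - S.x k i t)
          (vr := v (pmass S.q S.ℓ S.N i / (S.x k (i+1) t - S.x k i t)))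
          hρmax hδ₀ hp hK0 hC₀ hGb
          (fun hr0 hr1 => hKb _ ⟨hr0, hr1⟩)
          (fun hr1 => by
            have hGpos : 0 < S.x k (i+1) t - S.x k i t := by nlinarith
            refine hnear _ hr1 ?_
            rw [div_le_iff₀ hGpos]
            linarith [hGb])
        exact this
      have habs : 0 ≤ ((K*ρmax + C₀*(ρmax+δ₀)) * ρmax / pmass S.q S.ℓ S.N i) *
          |S.x k (i+1) t - S.x k i t - pmass S.q S.ℓ S.N i / ρmax| :=
        mul_nonneg (div_nonneg (mul_nonneg (by nlinarith) hρmax.le) (hppos i).le)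
          (abs_nonneg _)
      simp only [neg_mul]
      linarith [hVb, hnn]
    · -- initial
      have := hstart i h1 h2
      have h5 : pmass S.q S.ℓ S.N i / ρmax
          ≤ S.x k (i+1) ((k:ℝ)*S.τ) - S.x k i ((k:ℝ)*S.τ) := by
        rw [div_le_iff₀ hρmax]
        linarith
      linarith
  -- downward induction
  have down : ∀ c ∈ Set.Icc ((k:ℝ)*S.τ) (((k:ℝ)+1)*S.τ),
      (∀ t ∈ Set.Icc ((k:ℝ)*S.τ) c, ∀ i : ℤ, -(S.N:ℤ) ≤ i → i ≤ (n:ℤ)-1 →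
        pmass S.q S.ℓ S.N i ≤ (ρmax+δ₀) * (S.x k (i+1) t - S.x k i t)) →
      ∀ d : ℕ, ∀ i : ℤ, -(S.N:ℤ) ≤ i → i ≤ (n:ℤ)-1 → (n:ℤ)-1-i ≤ d →
      ∀ t ∈ Set.Icc ((k:ℝ)*S.τ) c,
        pmass S.q S.ℓ S.N i ≤ ρmax * (S.x k (i+1) t - S.x k i t) := by
    intro c hc hm' d
    induction d with
    | zero =>
      intro i h1 h2 hd t ht
      have hieq : i + 1 = (n:ℤ) := by omega
      refine core c hc hm' i h1 h2 ?_ t ht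
      intro u hu
      exact hVnonneg (i+1) (by omega) (by omega) u (fun hcon => absurd hcon (by omega))
    | succ d ih =>
      intro i h1 h2 hd t ht
      refine core c hc hm' i h1 h2 ?_ t ht
      intro u hu
      rcases eq_or_lt_of_le h2 with he | hlt
      · exact hVnonneg (i+1) (by omega) (by omega) u (fun hcon => absurd hcon (by omega))
      · exact hVnonneg (i+1) (by omega) (by omega) u
          (fun _ => ih (i+1) (by omega) (by omega) (by omega) u hu)
  -- the barrier argument
  have outer : ∀ t ∈ Set.Icc ((k:ℝ)*S.τ) (((k:ℝ)+1)*S.τ), ∀ i : ℤ,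
      -(S.N:ℤ) ≤ i → i ≤ (n:ℤ)-1 →
      pmass S.q S.ℓ S.N i ≤ (ρmax+δ₀) * (S.x k (i+1) t - S.x k i t) := by
    by_contra hcon
    push_neg at hcon
    obtain ⟨t₁, ht₁, i₁, hi₁1, hi₁2, hi₁3⟩ := hcon
    set F := {u : ℝ | u ∈ Set.Icc ((k:ℝ)*S.τ) (((k:ℝ)+1)*S.τ) ∧ ∃ i : ℤ,
      -(S.N:ℤ) ≤ i ∧ i ≤ (n:ℤ)-1 ∧
      (ρmax+δ₀)*(S.x k (i+1) u - S.x k i u) < pmass S.q S.ℓ S.N i} with hFdef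
    have hFne : F.Nonempty := ⟨t₁, ht₁, i₁, hi₁1, hi₁2, hi₁3⟩
    have hFbdd : BddBelow F := ⟨(k:ℝ)*S.τ, fun u hu => hu.1.1⟩
    set c := sInf F with hcdef
    have hca : (k:ℝ)*S.τ ≤ c := le_csInf hFne (fun u hu => hu.1.1)
    have hcb : c ≤ ((k:ℝ)+1)*S.τ := by
      obtain ⟨u, hu⟩ := hFne
      exact (csInf_le hFbdd hu).trans hu.1.2
    have hcmem : c ∈ Set.Icc ((k:ℝ)*S.τ) (((k:ℝ)+1)*S.τ) := ⟨hca, hcb⟩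
    have hpre : ∀ u ∈ Set.Icc ((k:ℝ)*S.τ) (((k:ℝ)+1)*S.τ), u < c → ∀ i : ℤ,
        -(S.N:ℤ) ≤ i → i ≤ (n:ℤ)-1 →
        pmass S.q S.ℓ S.N i ≤ (ρmax+δ₀)*(S.x k (i+1) u - S.x k i u) := by
      intro u hu huc i hh1 hh2
      by_contra hcc
      push_neg at hcc
      have : u ∈ F := ⟨hu, i, hh1, hh2, hcc⟩
      exact absurd (csInf_le hFbdd this) (not_le.mpr huc)
    have hatc : ∀ i : ℤ, -(S.N:ℤ) ≤ i → i ≤ (n:ℤ)-1 →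
        pmass S.q S.ℓ S.N i ≤ (ρmax+δ₀)*(S.x k (i+1) c - S.x k i c) := by
      intro i hh1 hh2
      rcases eq_or_lt_of_le hca with he | hlt
      · rw [← he]
        have := hstart i hh1 hh2
        have hgpos : 0 ≤ S.x k (i+1) ((k:ℝ)*S.τ) - S.x k i ((k:ℝ)*S.τ) := by
          nlinarith [hppos i]
        nlinarith
      · by_contra hneg
        push_neg at hneg
        have hcw : ContinuousWithinAt (fun u => S.x k (i+1) u - S.x k i u)
            (Set.Ioo ((k:ℝ)*S.τ) c) c :=
          ((hVder i hh1 hh2 c hcmem).continuousWithinAt).mono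
            (fun u hu => ⟨hu.1.le, hu.2.le.trans hcb⟩)
        have htd := Filter.Tendsto.const_mul (ρmax+δ₀) hcw
        have hev := htd.eventually_lt_const hneg
        have hclos : c ∈ closure (Set.Ioo ((k:ℝ)*S.τ) c) := by
          rw [closure_Ioo (ne_of_lt hlt)]
          exact ⟨hlt.le, le_rfl⟩
        have hnb : (𝓝[Set.Ioo ((k:ℝ)*S.τ) c] c).NeBot :=
          mem_closure_iff_nhdsWithin_neBot.mp hclos
        obtain ⟨u, hu1, hu2⟩ := (hev.and eventually_mem_nhdsWithin).exists
        have := hpre u ⟨hu2.1.le, hu2.2.le.trans hcb⟩ hu2.2 i hh1 hh2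
        linarith
    have hIccc : ∀ t ∈ Set.Icc ((k:ℝ)*S.τ) c, ∀ i : ℤ, -(S.N:ℤ) ≤ i → i ≤ (n:ℤ)-1 →
        pmass S.q S.ℓ S.N i ≤ (ρmax+δ₀)*(S.x k (i+1) t - S.x k i t) := by
      intro t ht i hh1 hh2
      rcases eq_or_lt_of_le ht.2 with he | hlt
      · rw [he]; exact hatc i hh1 hh2
      · exact hpre t ⟨ht.1, ht.2.trans hcb⟩ hlt i hh1 hh2
    have hgoodc : ∀ i : ℤ, -(S.N:ℤ) ≤ i → i ≤ (n:ℤ)-1 →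
        pmass S.q S.ℓ S.N i ≤ ρmax * (S.x k (i+1) c - S.x k i c) := by
      intro i hh1 hh2
      exact down c hcmem hIccc (n + S.N) i hh1 hh2 (by push_cast; omega) c ⟨hca, le_rfl⟩
    have hstrict : ∀ i : ℤ, -(S.N:ℤ) ≤ i → i ≤ (n:ℤ)-1 →
        pmass S.q S.ℓ S.N i < (ρmax+δ₀)*(S.x k (i+1) c - S.x k i c) := by
      intro i hh1 hh2
      have h6 := hgoodc i hh1 hh2
      have hgpos : 0 < S.x k (i+1) c - S.x k i c := by nlinarith [hppos i]
      nlinarith [hppos i]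
    have hclo : c ∈ closure F := csInf_mem_closure hFne hFbdd
    have hnb2 : (𝓝[F] c).NeBot := mem_closure_iff_nhdsWithin_neBot.mp hclo
    have hev2 : ∀ᶠ u in 𝓝[F] c, ∀ i ∈ Finset.Icc (-(S.N:ℤ)) ((n:ℤ)-1),
        pmass S.q S.ℓ S.N i < (ρmax+δ₀)*(S.x k (i+1) u - S.x k i u) := by
      rw [eventually_all_finset]
      intro i hi
      rw [Finset.mem_Icc] at hi
      have hcw : ContinuousWithinAt (fun u => S.x k (i+1) u - S.x k i u) F c :=
        ((hVder i hi.1 hi.2 c hcmem).continuousWithinAt).mono (fun u hu => hu.1)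
      exact (Filter.Tendsto.const_mul (ρmax+δ₀) hcw).eventually_const_lt
        (hstrict i hi.1 hi.2)
    obtain ⟨u, hu1, hu2⟩ := (hev2.and eventually_mem_nhdsWithin).exists
    obtain ⟨humem, i, hi1, hi2, hilt⟩ := hu2
    have := hu1 i (Finset.mem_Icc.mpr ⟨hi1, hi2⟩)
    linarith
  intro t ht i h1 h2
  exact down (((k:ℝ)+1)*S.τ) ⟨hab, le_rfl⟩
    (fun u hu => outer u hu) (n + S.N) i h1 h2 (by push_cast; omega) t ht

end FTLibvp
end DevB2
section DevC
variable {ρmax vmax δ T : ℝ} {v v' rbar rb0 rb1 : ℝ → ℝ} {n m : ℕ}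

lemma gap_div_bound {ρmax δ r c : ℝ} (hδ : 0 < δ) (hc : 0 < c) (hr1 : δ ≤ r)
    (hr2 : r ≤ ρmax) : c ≤ ρmax * (c / r) := by
  have hrpos : 0 < r := lt_of_lt_of_le hδ hr1
  have h2 : ρmax * (c / r) = (ρmax * c) / r := by ring
  rw [h2, le_div_iff₀ hrpos]
  nlinarith

namespace FTLibvp

lemma goodRearr (S : FTLibvp ρmax vmax T v rbar rb0 rb1 n m)
    (hρmax : 0 < ρmax) (hδ : 0 < δ) (hvmax : 0 < vmax) (hT : 0 < T) (hn : 1 ≤ n) (hm : 1 ≤ m)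
    (hrange : ∀ y ∈ Set.Ioo (0:ℝ) 1, rbar y ∈ Set.Icc δ ρmax)
    (hb0_range : ∀ t, 0 ≤ t → rb0 t ∈ Set.Icc δ ρmax)
    (hb1_range : ∀ t, 0 ≤ t → rb1 t ∈ Set.Icc δ ρmax)
    (k : ℕ) (h1k : 1 ≤ k) (hkm : k < m)
    (hprev : ∀ i : ℤ, -(S.N:ℤ) ≤ i → i ≤ (n:ℤ)-1 →
      pmass S.q S.ℓ S.N i ≤ ρmax * (S.x (k-1) (i+1) ((k:ℝ)*S.τ) - S.x (k-1) i ((k:ℝ)*S.τ))) :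
    ∀ i : ℤ, -(S.N:ℤ) ≤ i → i ≤ (n:ℤ)-1 →
      pmass S.q S.ℓ S.N i ≤ ρmax * (S.x k (i+1) ((k:ℝ)*S.τ) - S.x k i ((k:ℝ)*S.τ)) := by
  have hτ : 0 < S.τ := S.taupos hT hm
  have hkτ0 : (0:ℝ) ≤ (k:ℝ)*S.τ := by positivity
  have hb0 := hb0_range _ hkτ0
  have hb1 := hb1_range _ hkτ0
  have hl : 0 < S.ℓ := S.lpos hρmax hδ hT hn hm hrange
  have hq : 0 < S.q := S.qpos hρmax hδ hvmax hT hn hm hrange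
  intro i hi1 hi2
  by_cases hiN : i = -(S.N:ℤ)
  · subst hiN
    have e := S.rearrLast k h1k hkm
    have hgap : S.x k (-(S.N:ℤ)+1) ((k:ℝ)*S.τ) - S.x k (-(S.N:ℤ)) ((k:ℝ)*S.τ)
        = S.q / rb0 ((k:ℝ)*S.τ) := by rw [e]; ring
    have hpm : pmass S.q S.ℓ S.N (-(S.N:ℤ)) = S.q := by unfold pmass; simp
    rw [hpm, hgap]
    exact gap_div_bound hδ hq hb0.1 hb0.2
  · have hpm : pmass S.q S.ℓ S.N i = S.ℓ := by unfold pmass; rw [if_neg hiN]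
    have hi1' : -(S.N:ℤ)+1 ≤ i := by omega
    rcases lt_or_ge ((n:ℤ) - (S.h1 k:ℤ) + 1) i with hB | hB
    · -- both right
      have e1 := S.rearrRight k h1k hkm i (by omega) (by omega)
      have e2 := S.rearrRight k h1k hkm (i+1) (by omega) (by omega)
      have hgap : S.x k (i+1) ((k:ℝ)*S.τ) - S.x k i ((k:ℝ)*S.τ)
          = S.ℓ / rb1 ((k:ℝ)*S.τ) := by
        rw [e1, e2]; push_cast; ring
      rw [hpm, hgap]
      exact gap_div_bound hδ hl hb1.1 hb1.2
    · rcases eq_or_lt_of_le hB with hBe | hBlt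
      · -- i = B
        have hx1 : (1:ℝ) ≤ S.x (k-1) i ((k:ℝ)*S.τ) :=
          (S.cross1 k h1k hkm.le i hi1 (by omega)).mpr (by omega)
        have hx0 : (0:ℝ) < S.x (k-1) i ((k:ℝ)*S.τ) := lt_of_lt_of_le zero_lt_one hx1
        have hAB : -(S.h0 k:ℤ) ≤ i := (S.cross0 k h1k hkm.le i hi1 (by omega)).mp hx0
        have e1 := S.rearrMid k h1k hkm i (by omega) (by omega)
        have e2 := S.rearrRight k h1k hkm (i+1) (by omega) (by omega)
        have hBe' : (n:ℤ) - (S.h1 k:ℤ) + 1 = i := hBe.symm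
        rw [hBe'] at e2
        have hcast : (i:ℝ) = (n:ℝ) - (S.h1 k:ℝ) + 1 := by exact_mod_cast hBe
        have hgap : S.x k (i+1) ((k:ℝ)*S.τ) - S.x k i ((k:ℝ)*S.τ)
            = S.ℓ / rb1 ((k:ℝ)*S.τ) := by
          rw [e1, e2]
          push_cast
          linear_combination (S.ℓ / rb1 ((k:ℝ)*S.τ)) * hcast
        rw [hpm, hgap]
        exact gap_div_bound hδ hl hb1.1 hb1.2
      · rcases lt_or_ge i (-(S.h0 k:ℤ) - 1) with hA | hA
        · rcases eq_or_lt_of_le (show i ≤ -(S.h0 k:ℤ)-2 by omega) with hAe | hAlt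
          · -- i = A-2 : left junction
            have e1 := S.rearrLeft k h1k hkm i (by omega) (by omega)
            have e2 := S.rearrMid k h1k hkm (i+1) (by omega) (by omega)
            have hanchor : -(S.h0 k:ℤ) - 1 = i + 1 := by omega
            rw [hanchor] at e1
            have hcast : (i:ℝ) = -(S.h0 k:ℝ) - 2 := by exact_mod_cast hAe
            have hgap : S.x k (i+1) ((k:ℝ)*S.τ) - S.x k i ((k:ℝ)*S.τ)
                = S.ℓ / rb0 ((k:ℝ)*S.τ) := by
              rw [e1, e2]
              push_cast
              linear_combination (-(S.ℓ / rb0 ((k:ℝ)*S.τ))) * hcast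
            rw [hpm, hgap]
            exact gap_div_bound hδ hl hb0.1 hb0.2
          · -- both left
            have e1 := S.rearrLeft k h1k hkm i (by omega) (by omega)
            have e2 := S.rearrLeft k h1k hkm (i+1) (by omega) (by omega)
            have hgap : S.x k (i+1) ((k:ℝ)*S.τ) - S.x k i ((k:ℝ)*S.τ)
                = S.ℓ / rb0 ((k:ℝ)*S.τ) := by
              rw [e1, e2]; push_cast; ring
            rw [hpm, hgap]
            exact gap_div_bound hδ hl hb0.1 hb0.2
        · -- both mid
          have e1 := S.rearrMid k h1k hkm i (by omega) (by omega)
          have e2 := S.rearrMid k h1k hkm (i+1) (by omega) (by omega)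
          rw [e1, e2]
          exact hprev i hi1 hi2

lemma goodAll (S : FTLibvp ρmax vmax T v rbar rb0 rb1 n m)
    (hρmax : 0 < ρmax) (hδ : 0 < δ) (hvmax : 0 < vmax) (hT : 0 < T) (hn : 1 ≤ n) (hm : 1 ≤ m)
    (hv_deriv : ∀ r ∈ Set.Icc (0:ℝ) ρmax, HasDerivAt v (v' r) r)
    (hv'_cont : ContinuousOn v' (Set.Icc (0:ℝ) ρmax))
    (hv_range : ∀ r ∈ Set.Icc (0:ℝ) ρmax, v r ∈ Set.Icc (0:ℝ) vmax)
    (hvρmax : v ρmax = 0)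
    (hrange : ∀ y ∈ Set.Ioo (0:ℝ) 1, rbar y ∈ Set.Icc δ ρmax)
    (hb0_range : ∀ t, 0 ≤ t → rb0 t ∈ Set.Icc δ ρmax)
    (hb1_range : ∀ t, 0 ≤ t → rb1 t ∈ Set.Icc δ ρmax) :
    ∀ k : ℕ, k < m → ∀ t ∈ Set.Icc ((k:ℝ)*S.τ) (((k:ℝ)+1)*S.τ), ∀ i : ℤ,
      -(S.N:ℤ) ≤ i → i ≤ (n:ℤ)-1 →
      pmass S.q S.ℓ S.N i ≤ ρmax * (S.x k (i+1) t - S.x k i t) := by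
  intro k
  induction k with
  | zero =>
    intro hk
    apply S.goodInterval hρmax hδ hvmax hT hn hm hv_deriv hv'_cont hv_range hvρmax hrange
      hb1_range 0 hk
    intro i h1 h2
    rw [show ((0:ℕ):ℝ)*S.τ = 0 by simp, S.ic i (by omega) (by omega),
      S.ic (i+1) (by omega) (by omega)]
    exact S.goodInit hρmax hδ hvmax hT hn hm hrange hb0_range i h1 h2
  | succ k' ih =>
    intro hk
    have hprevInt := ih (by omega)
    have hend : ∀ i : ℤ, -(S.N:ℤ) ≤ i → i ≤ (n:ℤ)-1 →
        pmass S.q S.ℓ S.N i ≤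
          ρmax * (S.x k' (i+1) (((k'+1:ℕ):ℝ)*S.τ) - S.x k' i (((k'+1:ℕ):ℝ)*S.τ)) := by
      intro i h1 h2
      have hmem : ((k'+1:ℕ):ℝ)*S.τ ∈ Set.Icc ((k':ℝ)*S.τ) (((k':ℝ)+1)*S.τ) := by
        constructor
        · push_cast
          have hτ : 0 < S.τ := S.taupos hT hm
          nlinarith
        · push_cast
          exact le_rfl
      exact hprevInt _ hmem i h1 h2
    have hrearr := S.goodRearr hρmax hδ hvmax hT hn hm hrange hb0_range hb1_range
      (k'+1) (by omega) hk ?_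
    · exact S.goodInterval hρmax hδ hvmax hT hn hm hv_deriv hv'_cont hv_range hvρmax hrange
        hb1_range (k'+1) hk hrearr
    · simpa only [Nat.add_sub_cancel] using hend

end FTLibvp
end DevC
section DevD
variable {ρmax vmax δ T : ℝ} {v v' rbar rb0 rb1 : ℝ → ℝ} {n m : ℕ}

lemma kIdx_eq {τ u : ℝ} (k : ℕ) (hτ : 0 < τ) (h1 : (k:ℝ)*τ < u) (h2 : u ≤ ((k:ℝ)+1)*τ) :
    kIdx τ u = k := by
  unfold kIdx
  have hceil : ⌈u/τ⌉₊ = k + 1 := by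
    rw [Nat.ceil_eq_iff (by omega)]
    constructor
    · show ((k+1-1:ℕ):ℝ) < u/τ
      rw [Nat.add_sub_cancel, lt_div_iff₀ hτ]
      exact_mod_cast h1
    · rw [div_le_iff₀ hτ]
      push_cast
      linarith [h2]
  omega

namespace FTLibvp

lemma xmono (S : FTLibvp ρmax vmax T v rbar rb0 rb1 n m) (k : ℕ) (hk : k < m)
    {u : ℝ} (hu : u ∈ Set.Icc ((k:ℝ)*S.τ) (((k:ℝ)+1)*S.τ)) :
    ∀ i j : ℤ, -(S.N:ℤ) ≤ i → i ≤ j → j ≤ (n:ℤ) → S.x k i u ≤ S.x k j u := by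
  have key : ∀ d : ℕ, ∀ i : ℤ, -(S.N:ℤ) ≤ i → i + d ≤ (n:ℤ) →
      S.x k i u ≤ S.x k (i + d) u := by
    intro d
    induction d with
    | zero => intro i _ _; norm_num
    | succ d ih =>
      intro i hi hid
      have h1 : S.x k i u ≤ S.x k (i + d) u := ih i hi (by push_cast at hid ⊢; omega)
      have h2 : S.x k (i + d) u < S.x k (i + d + 1) u :=
        S.order k hk u hu (i + d) (by omega) (by push_cast at hid ⊢; omega)
      have h3 : i + ((d:ℤ) + 1) = i + d + 1 := by ring
      push_cast
      rw [h3]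
      linarith
  intro i j hi hij hj
  have hd : j = i + ((j - i).toNat : ℤ) := by omega
  rw [hd]
  exact key _ i hi (by omega)

lemma displace (S : FTLibvp ρmax vmax T v rbar rb0 rb1 n m)
    (hρmax : 0 < ρmax) (hδ : 0 < δ) (hvmax : 0 < vmax) (hT : 0 < T) (hn : 1 ≤ n) (hm : 1 ≤ m)
    (hv_deriv : ∀ r ∈ Set.Icc (0:ℝ) ρmax, HasDerivAt v (v' r) r)
    (hv'_cont : ContinuousOn v' (Set.Icc (0:ℝ) ρmax))
    (hv_range : ∀ r ∈ Set.Icc (0:ℝ) ρmax, v r ∈ Set.Icc (0:ℝ) vmax)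
    (hvρmax : v ρmax = 0)
    (hrange : ∀ y ∈ Set.Ioo (0:ℝ) 1, rbar y ∈ Set.Icc δ ρmax)
    (hb0_range : ∀ t, 0 ≤ t → rb0 t ∈ Set.Icc δ ρmax)
    (hb1_range : ∀ t, 0 ≤ t → rb1 t ∈ Set.Icc δ ρmax)
    (k : ℕ) (hk : k < m) {s t : ℝ}
    (hs : s ∈ Set.Icc ((k:ℝ)*S.τ) (((k:ℝ)+1)*S.τ))
    (ht : t ∈ Set.Icc ((k:ℝ)*S.τ) (((k:ℝ)+1)*S.τ)) (hst : s ≤ t) :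
    ∀ i : ℤ, -(S.N:ℤ) ≤ i → i ≤ (n:ℤ) → |S.x k i t - S.x k i s| ≤ vmax * (t - s) := by
  have hgood := S.goodAll hρmax hδ hvmax hT hn hm hv_deriv hv'_cont hv_range hvρmax hrange
    hb0_range hb1_range k hk
  have hppos : ∀ i : ℤ, 0 < pmass S.q S.ℓ S.N i := fun i =>
    S.pmass_pos hρmax hδ hvmax hT hn hm hrange i
  have hτ : 0 < S.τ := S.taupos hT hm
  have ha0 : (0:ℝ) ≤ (k:ℝ)*S.τ := by positivity
  have hsub : Set.Icc s t ⊆ Set.Icc ((k:ℝ)*S.τ) (((k:ℝ)+1)*S.τ) :=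
    Set.Icc_subset_Icc hs.1 ht.2
  intro i h1 h2
  rcases eq_or_lt_of_le h2 with he | hlt
  · -- leader
    have key := norm_image_sub_le_of_norm_deriv_le_segment'
      (f := S.x k i) (f' := fun _ => v (rb1 ((k:ℝ)*S.τ))) (a := s) (b := t) (C := vmax)
      (fun u hu => by
        rw [he]
        exact (S.odeLead k hk u (hsub hu)).mono hsub)
      (fun u _ => by
        have hb := hb1_range _ ha0
        have := hv_range _ ⟨le_trans hδ.le hb.1, hb.2⟩
        rw [Real.norm_eq_abs, abs_le]
        exact ⟨by linarith [this.1], this.2⟩)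
      t (Set.right_mem_Icc.mpr hst)
    rw [Real.norm_eq_abs] at key
    exact key
  · -- followers
    have key := norm_image_sub_le_of_norm_deriv_le_segment'
      (f := S.x k i)
      (f' := fun u => v (pmass S.q S.ℓ S.N i / (S.x k (i+1) u - S.x k i u)))
      (a := s) (b := t) (C := vmax)
      (fun u hu => (S.ode k hk i h1 (by omega) u (hsub hu)).mono hsub)
      (fun u hu => by
        have hgd := hgood u (hsub (Set.mem_Icc.mpr ⟨hu.1, hu.2.le⟩)) i h1 (by omega)
        have hgpos : 0 < S.x k (i+1) u - S.x k i u := by nlinarith [hppos i]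
        have hr : pmass S.q S.ℓ S.N i / (S.x k (i+1) u - S.x k i u) ∈
            Set.Icc (0:ℝ) ρmax := by
          constructor
          · exact le_of_lt (div_pos (hppos i) hgpos)
          · rw [div_le_iff₀ hgpos]; linarith
        have := hv_range _ hr
        rw [Real.norm_eq_abs, abs_le]
        exact ⟨by linarith [this.1], this.2⟩)
      t (Set.right_mem_Icc.mpr hst)
    rw [Real.norm_eq_abs] at key
    exact key

lemma mass_sum (S : FTLibvp ρmax vmax T v rbar rb0 rb1 n m)
    (hρmax : 0 < ρmax) (hδ : 0 < δ) (hvmax : 0 < vmax) (hT : 0 < T) (hn : 1 ≤ n) (hm : 1 ≤ m)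
    (hrange : ∀ y ∈ Set.Ioo (0:ℝ) 1, rbar y ∈ Set.Icc δ ρmax) :
    ∑ i ∈ Finset.Icc (-(S.N:ℤ)) ((n:ℤ)-1), pmass S.q S.ℓ S.N i = S.Q + S.L := by
  have hN : 1 ≤ S.N := S.Npos hρmax hδ hvmax hT hn hm hrange
  have hmem : -(S.N:ℤ) ∈ Finset.Icc (-(S.N:ℤ)) ((n:ℤ)-1) :=
    Finset.mem_Icc.mpr ⟨le_rfl, by omega⟩
  have hsplit : ∀ i : ℤ, pmass S.q S.ℓ S.N i
      = (if i = -(S.N:ℤ) then S.q - S.ℓ else 0) + S.ℓ := by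
    intro i; unfold pmass; split <;> ring
  rw [Finset.sum_congr rfl (fun i _ => hsplit i), Finset.sum_add_distrib,
    Finset.sum_ite_eq' _ _ (fun _ => S.q - S.ℓ), if_pos hmem, Finset.sum_const]
  have hcard : (Finset.Icc (-(S.N:ℤ)) ((n:ℤ)-1)).card = n + S.N := by
    rw [Int.card_Icc]
    omega
  rw [hcard, nsmul_eq_mul]
  have hLeq : S.L = n * S.ℓ := S.Leq hn
  rw [S.hq, hLeq]
  push_cast
  ring

lemma cdf_formula (S : FTLibvp ρmax vmax T v rbar rb0 rb1 n m) (k : ℕ) (hk : k < m)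
    {u : ℝ} (hu : u ∈ Set.Icc ((k:ℝ)*S.τ) (((k:ℝ)+1)*S.τ)) (hku : kIdx S.τ u = k)
    (y : ℝ) :
    (∫ z in Set.Iic y, S.dens u z) =
    ∑ i ∈ Finset.Icc (-(S.N:ℤ)) ((n:ℤ)-1),
      pmass S.q S.ℓ S.N i / (S.x k (i+1) u - S.x k i u) *
        max (min y (S.x k (i+1) u) - S.x k i u) 0 := by
  unfold FTLibvp.dens
  rw [hku]
  rw [integral_finset_sum _ (fun i _ => by
    rw [integrable_indicator_iff measurableSet_Ico]
    exact (integrableOn_const_iff).mpr (Or.inr (lt_of_le_of_lt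
      (Measure.restrict_apply_le _ _) (by rw [Real.volume_Ico]; exact ENNReal.ofReal_lt_top))))]
  refine Finset.sum_congr rfl fun i hi => ?_
  have hi' := Finset.mem_Icc.mp hi
  exact integral_indicator_Ico (S.order k hk u hu i hi'.1 hi'.2)

end FTLibvp
end DevD
set_option maxHeartbeats 1000000 in
/-- **Intra-step Wasserstein continuity for the follow-the-leader scheme with boundary
data**: for `k τ_m < s < t < (k+1) τ_m`,
`W_{Q+L,1}(ρ^{n,m}(t,·), ρ^{n,m}(s,·)) ≤ (3/2)(Q+L) vmax (t−s)`. -/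
theorem stmt12
    -- velocity hypothesis (V1)
    (ρmax vmax δ T : ℝ) (hρmax : 0 < ρmax) (hvmaxpos : 0 < vmax) (hδ : 0 < δ) (hT : 0 < T)
    (v v' : ℝ → ℝ)
    (hv_deriv : ∀ r ∈ Set.Icc (0:ℝ) ρmax, HasDerivAt v (v' r) r)
    (hv'_cont : ContinuousOn v' (Set.Icc (0:ℝ) ρmax))
    (hv'_neg : ∀ r ∈ Set.Icc (0:ℝ) ρmax, v' r < 0)
    (hv_range : ∀ r ∈ Set.Icc (0:ℝ) ρmax, v r ∈ Set.Icc (0:ℝ) vmax)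
    (hv0 : v 0 = vmax) (hvρmax : v ρmax = 0)
    -- initial datum (I3) and boundary data (B)
    (rbar rb0 rb1 : ℝ → ℝ)
    (hrbar_range : ∀ y ∈ Set.Ioo (0:ℝ) 1, rbar y ∈ Set.Icc δ ρmax)
    (hrbar_BV : BoundedVariationOn rbar (Set.Ioo 0 1))
    (hb0_range : ∀ t, 0 ≤ t → rb0 t ∈ Set.Icc δ ρmax)
    (hb1_range : ∀ t, 0 ≤ t → rb1 t ∈ Set.Icc δ ρmax)
    (K₀ K₁ : ℝ≥0)
    (hb0_lip : LipschitzOnWith K₀ rb0 (Set.Ici 0))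
    (hb1_lip : LipschitzOnWith K₁ rb1 (Set.Ici 0))
    (hb0_BV : BoundedVariationOn rb0 (Set.Ici 0))
    (hb1_BV : BoundedVariationOn rb1 (Set.Ici 0))
    : ∀ n m : ℕ, 1 ≤ n → 1 ≤ m →
      ∀ S : FTLibvp ρmax vmax T v rbar rb0 rb1 n m,
      ∀ k : ℕ, k < m → ∀ s t : ℝ,
        (k : ℝ) * S.τ < s → s < t → t < ((k : ℝ) + 1) * S.τ →
        scaledWass (S.Q + S.L) (S.dens t) (S.dens s)
          ≤ (3 / 2) * (S.Q + S.L) * vmax * (t - s) := by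

  intro n m hn hm S k hk s t hks hst htk
  have hτ : 0 < S.τ := S.taupos hT hm
  have hl : 0 < S.ℓ := S.lpos hρmax hδ hT hn hm hrbar_range
  have hQp : 0 < S.Q := S.Qpos hρmax hvmaxpos hT
  have hLp : 0 < S.L := S.Lpos hρmax hδ hT hn hm hrbar_range
  have hM : 0 < S.Q + S.L := by linarith
  have hppos : ∀ i : ℤ, 0 < pmass S.q S.ℓ S.N i := fun i =>
    S.pmass_pos hρmax hδ hvmaxpos hT hn hm hrbar_range i
  set c := vmax * (t - s) with hcdef
  have hc0 : 0 ≤ c := by nlinarith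
  have ha0 : (0:ℝ) ≤ (k:ℝ)*S.τ := by positivity
  have hsmem : s ∈ Set.Icc ((k:ℝ)*S.τ) (((k:ℝ)+1)*S.τ) := ⟨hks.le, le_trans hst.le htk.le⟩
  have htmem : t ∈ Set.Icc ((k:ℝ)*S.τ) (((k:ℝ)+1)*S.τ) := ⟨le_trans hks.le hst.le, htk.le⟩
  have hkt : kIdx S.τ t = k := kIdx_eq k hτ (lt_trans hks hst) htk.le
  have hks' : kIdx S.τ s = k := kIdx_eq k hτ hks (le_trans hst.le htk.le)
  have hdisp := S.displace hρmax hδ hvmaxpos hT hn hm hv_deriv hv'_cont hv_range hvρmax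
    hrbar_range hb0_range hb1_range k hk hsmem htmem hst.le
  have hsum := S.mass_sum hρmax hδ hvmaxpos hT hn hm hrbar_range
  -- upper bound on the CDF
  have hFle : ∀ (u : ℝ), u ∈ Set.Icc ((k:ℝ)*S.τ) (((k:ℝ)+1)*S.τ) → kIdx S.τ u = k →
      ∀ y, (∫ z in Set.Iic y, S.dens u z) ≤ S.Q + S.L := by
    intro u hu hku y
    rw [S.cdf_formula k hk hu hku y, ← hsum]
    apply Finset.sum_le_sum
    intro i hi
    obtain ⟨h1, h2⟩ := Finset.mem_Icc.mp hi
    have hord := S.order k hk u hu i h1 h2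
    have hgpos : 0 < S.x k (i+1) u - S.x k i u := by linarith
    have hmax : max (min y (S.x k (i+1) u) - S.x k i u) 0 ≤ S.x k (i+1) u - S.x k i u :=
      max_le (by linarith [min_le_right y (S.x k (i+1) u)]) hgpos.le
    calc pmass S.q S.ℓ S.N i / (S.x k (i+1) u - S.x k i u) *
          max (min y (S.x k (i+1) u) - S.x k i u) 0
        ≤ pmass S.q S.ℓ S.N i / (S.x k (i+1) u - S.x k i u) *
          (S.x k (i+1) u - S.x k i u) :=
          mul_le_mul_of_nonneg_left hmax (le_of_lt (div_pos (hppos i) hgpos))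
      _ = pmass S.q S.ℓ S.N i := div_mul_cancel₀ _ hgpos.ne'
  -- CDF attains the full mass at the rightmost particle
  have hFtop : ∀ (u : ℝ), u ∈ Set.Icc ((k:ℝ)*S.τ) (((k:ℝ)+1)*S.τ) → kIdx S.τ u = k →
      (∫ z in Set.Iic (S.x k (n:ℤ) u), S.dens u z) = S.Q + S.L := by
    intro u hu hku
    rw [S.cdf_formula k hk hu hku _, ← hsum]
    refine Finset.sum_congr rfl fun i hi => ?_
    obtain ⟨h1, h2⟩ := Finset.mem_Icc.mp hi
    have hord := S.order k hk u hu i h1 h2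
    have hgpos : 0 < S.x k (i+1) u - S.x k i u := by linarith
    have hble : S.x k (i+1) u ≤ S.x k (n:ℤ) u := S.xmono k hk hu (i+1) (n:ℤ) (by omega)
      (by omega) le_rfl
    rw [min_eq_right hble, max_eq_left hgpos.le, div_mul_cancel₀ _ hgpos.ne']
  -- CDF vanishes to the left of the leftmost particle
  have hFbot : ∀ (u : ℝ), u ∈ Set.Icc ((k:ℝ)*S.τ) (((k:ℝ)+1)*S.τ) → kIdx S.τ u = k →
      ∀ y, y < S.x k (-(S.N:ℤ)) u → (∫ z in Set.Iic y, S.dens u z) = 0 := by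
    intro u hu hku y hy
    rw [S.cdf_formula k hk hu hku y]
    apply Finset.sum_eq_zero
    intro i hi
    obtain ⟨h1, h2⟩ := Finset.mem_Icc.mp hi
    have hage : S.x k (-(S.N:ℤ)) u ≤ S.x k i u := S.xmono k hk hu _ i le_rfl h1 (by omega)
    have hmax : max (min y (S.x k (i+1) u) - S.x k i u) 0 = 0 :=
      max_eq_right (by linarith [min_le_left y (S.x k (i+1) u)])
    rw [hmax, mul_zero]
  -- CDF comparison via particle displacement
  have hcomp : ∀ y, (∫ z in Set.Iic y, S.dens s z) ≤ ∫ z in Set.Iic (y+c), S.dens t z := by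
    intro y
    rw [S.cdf_formula k hk hsmem hks' y, S.cdf_formula k hk htmem hkt (y+c)]
    apply Finset.sum_le_sum
    intro i hi
    obtain ⟨h1, h2⟩ := Finset.mem_Icc.mp hi
    have hords := S.order k hk s hsmem i h1 h2
    have hordt := S.order k hk t htmem i h1 h2
    have hdi := abs_le.mp (hdisp i h1 (by omega))
    have hdi1 := abs_le.mp (hdisp (i+1) (by omega) (by omega))
    exact phi_shift (hppos i).le hords hordt (by linarith [hdi.2]) (by linarith [hdi1.2])
  have hcomp' : ∀ y, (∫ z in Set.Iic y, S.dens t z) ≤ ∫ z in Set.Iic (y+c), S.dens s z := by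
    intro y
    rw [S.cdf_formula k hk htmem hkt y, S.cdf_formula k hk hsmem hks' (y+c)]
    apply Finset.sum_le_sum
    intro i hi
    obtain ⟨h1, h2⟩ := Finset.mem_Icc.mp hi
    have hords := S.order k hk s hsmem i h1 h2
    have hordt := S.order k hk t htmem i h1 h2
    have hdi := abs_le.mp (hdisp i h1 (by omega))
    have hdi1 := abs_le.mp (hdisp (i+1) (by omega) (by omega))
    exact phi_shift (hppos i).le hordt hords (by linarith [hdi.1]) (by linarith [hdi1.1])
  -- pointwise bound on the pseudo-inverses
  have hPI : ∀ z ∈ Set.Ioc (0:ℝ) (S.Q+S.L),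
      |pseudoInv (S.dens t) z - pseudoInv (S.dens s) z| ≤ c := by
    intro z hz
    rcases lt_or_eq_of_le hz.2 with hzM | hzM
    · have hAtne : {x : ℝ | z < ∫ y in Set.Iic x, S.dens t y}.Nonempty :=
        ⟨S.x k (n:ℤ) t, by simp only [Set.mem_setOf_eq]; rw [hFtop t htmem hkt]; exact hzM⟩
      have hAsne : {x : ℝ | z < ∫ y in Set.Iic x, S.dens s y}.Nonempty :=
        ⟨S.x k (n:ℤ) s, by simp only [Set.mem_setOf_eq]; rw [hFtop s hsmem hks']; exact hzM⟩
      have hAtbdd : BddBelow {x : ℝ | z < ∫ y in Set.Iic x, S.dens t y} := by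
        refine ⟨S.x k (-(S.N:ℤ)) t, fun x hx => ?_⟩
        by_contra hxc
        push_neg at hxc
        rw [Set.mem_setOf_eq, hFbot t htmem hkt x hxc] at hx
        linarith [hz.1]
      have hAsbdd : BddBelow {x : ℝ | z < ∫ y in Set.Iic x, S.dens s y} := by
        refine ⟨S.x k (-(S.N:ℤ)) s, fun x hx => ?_⟩
        by_contra hxc
        push_neg at hxc
        rw [Set.mem_setOf_eq, hFbot s hsmem hks' x hxc] at hx
        linarith [hz.1]
      have hd1 : pseudoInv (S.dens t) z ≤ pseudoInv (S.dens s) z + c := by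
        unfold pseudoInv
        exact sInf_le_sInf_add hAsne hAtbdd
          (fun x hx => lt_of_lt_of_le hx (hcomp x))
      have hd2 : pseudoInv (S.dens s) z ≤ pseudoInv (S.dens t) z + c := by
        unfold pseudoInv
        exact sInf_le_sInf_add hAtne hAsbdd
          (fun x hx => lt_of_lt_of_le hx (hcomp' x))
      rw [abs_le]
      constructor <;> linarith
    · have hAt : {x : ℝ | z < ∫ y in Set.Iic x, S.dens t y} = ∅ := by
        ext x
        simp only [Set.mem_setOf_eq, Set.mem_empty_iff_false, iff_false, not_lt]
        rw [hzM]
        exact hFle t htmem hkt x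
      have hAs : {x : ℝ | z < ∫ y in Set.Iic x, S.dens s y} = ∅ := by
        ext x
        simp only [Set.mem_setOf_eq, Set.mem_empty_iff_false, iff_false, not_lt]
        rw [hzM]
        exact hFle s hsmem hks' x
      unfold pseudoInv
      rw [hAt, hAs, Real.sInf_empty]
      simpa using hc0
  -- integrate the pointwise bound
  unfold scaledWass
  by_cases hI : IntegrableOn
      (fun z => |pseudoInv (S.dens t) z - pseudoInv (S.dens s) z|) (Set.Ioc 0 (S.Q+S.L))
  · have hmono := setIntegral_mono_on hI
      ((integrableOn_const_iff).mpr (Or.inr (by rw [Real.volume_Ioc]; exact ENNReal.ofReal_lt_top)))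
      measurableSet_Ioc (fun z hz => hPI z hz)
    have hconst : (∫ _z in Set.Ioc (0:ℝ) (S.Q+S.L), c) = (S.Q+S.L) * c := by
      rw [setIntegral_const, measureReal_def, Real.volume_Ioc, ENNReal.toReal_ofReal (by linarith), smul_eq_mul]
      ring
    rw [hconst] at hmono
    have hfin : (S.Q+S.L) * c ≤ (3/2) * (S.Q + S.L) * vmax * (t - s) := by
      rw [hcdef]
      nlinarith
    linarith
  · rw [integral_undef hI]
    nlinarith
end
end

section
/- Discrete density bounds for the Aw–Rascle–Zhang follow-the-leader system: let p ∈ C⁰([0,∞);[0,∞)) ∩ C²((0,∞)) with p(0⁺) = 0, p'(ρ) > 0 and 2p'(ρ) + ρ p''(ρ) > 0 for ρ > 0. Let ℓ > 0, let w̄₀,…,w̄_{n−1} > 0, and let x̄₀ < x̄₁ < … < x̄ₙ satisfy ℓ ≤ (x̄ᵢ₊₁ − x̄ᵢ)·p⁻¹(w̄ᵢ) for i = 0,…,n−1. Let the particles evolve by xₙ(t) = x̄ₙ + w̄_{n−1} t and ẋᵢ(t) = w̄ᵢ − p(ℓ/(xᵢ₊₁(t) − xᵢ(t))) with xᵢ(0)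 = x̄ᵢ, and set Rᵢ(t) = ℓ/(xᵢ₊₁(t) − xᵢ(t)). Then for every t ≥ 0 and every i = 0,…,n−1: ℓ/(x̄ₙ − x̄₀ + w̄_{n−1} t) ≤ Rᵢ(t) ≤ p⁻¹(w̄ᵢ); in particular x₀(t) ≥ x̄₀ for all t ≥ 0. -/
open MeasureTheory Set Filter Topology

/-- Invariance/barrier lemma: if `g(0) ≥ b` and `g' > 0` whenever `g < b`,
then `g ≥ b` on `[0,∞)`. -/
lemma barrier19 (g g' : ℝ → ℝ) (b : ℝ)
    (hg : ∀ t ∈ Set.Ici (0:ℝ), HasDerivWithinAt g (g' t) (Set.Ici 0) t)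
    (h0 : b ≤ g 0)
    (hpos : ∀ t ∈ Set.Ici (0:ℝ), g t < b → 0 < g' t) :
    ∀ t ∈ Set.Ici (0:ℝ), b ≤ g t := by
  intro t₁ ht₁
  by_contra h
  push_neg at h
  have hgc : ContinuousOn g (Set.Ici 0) := fun t ht => (hg t ht).continuousWithinAt
  set c := (g t₁ + b) / 2 with hc
  have hc1 : g t₁ < c := by simp only [hc]; linarith
  have hc2 : c < b := by simp only [hc]; linarith
  set S := {t : ℝ | t ∈ Set.Icc 0 t₁ ∧ c ≤ g t} with hS
  have ht₁0 : (0:ℝ) ≤ t₁ := ht₁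
  have hS0 : (0:ℝ) ∈ S := ⟨⟨le_refl _, ht₁0⟩, by linarith⟩
  have hScl : IsClosed S := by
    have : S = Set.Icc 0 t₁ ∩ g ⁻¹' Set.Ici c := by
      ext t; simp [hS, Set.mem_Icc, and_assoc]
    rw [this]
    exact (hgc.mono (Set.Icc_subset_Ici_self)).preimage_isClosed_of_isClosed
      isClosed_Icc isClosed_Ici
  have hScp : IsCompact S := (isCompact_Icc (a := (0:ℝ)) (b := t₁)).of_isClosed_subset hScl
    (fun t ht => ht.1)
  have hSne : S.Nonempty := ⟨0, hS0⟩
  set t₀ := sSup S with ht₀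
  have ht₀S : t₀ ∈ S := hScp.sSup_mem hSne
  have ht₀1 : t₀ < t₁ := lt_of_le_of_ne ht₀S.1.2 (by
    intro hE; rw [hE] at ht₀S; exact absurd ht₀S.2 (not_le.2 hc1))
  have hbelow : ∀ t, t₀ < t → t ≤ t₁ → g t < c := by
    intro t htl htu
    by_contra hcc
    push_neg at hcc
    have : t ∈ S := ⟨⟨le_trans ht₀S.1.1 htl.le, htu⟩, hcc⟩
    exact absurd (le_csSup hScp.bddAbove this) (not_le.2 htl)
  have hmono : StrictMonoOn g (Set.Icc t₀ t₁) := by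
    apply strictMonoOn_of_deriv_pos (convex_Icc _ _)
    · exact hgc.mono (fun t ht => le_trans ht₀S.1.1 ht.1)
    · intro s hs
      rw [interior_Icc] at hs
      have hs0 : (0:ℝ) < s := lt_of_le_of_lt ht₀S.1.1 hs.1
      have hd : HasDerivAt g (g' s) s :=
        (hg s hs0.le).hasDerivAt (Ici_mem_nhds hs0)
      rw [hd.deriv]
      exact hpos s hs0.le (lt_trans (hbelow s hs.1 hs.2.le) hc2)
  have := hmono ⟨le_refl _, ht₀1.le⟩ ⟨ht₀1.le, le_refl _⟩ ht₀1
  have := ht₀S.2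
  linarith

/-- **Discrete density bounds for the Aw–Rascle–Zhang follow-the-leader system.**
With `Rᵢ(t) = ℓ/(xᵢ₊₁(t) − xᵢ(t))` one has
`ℓ/(x̄ₙ − x̄₀ + w̄_{n−1} t) ≤ Rᵢ(t) ≤ p⁻¹(w̄ᵢ)` for all `t ≥ 0` and `i < n`;
in particular `x₀(t) ≥ x̄₀`. -/
theorem stmt19
    -- hypotheses on the pressure p
    (p p' p'' : ℝ → ℝ)
    (hp_cont : ContinuousOn p (Set.Ici 0)) (hp0 : p 0 = 0)
    (hp_deriv : ∀ r ∈ Set.Ioi (0:ℝ), HasDerivAt p (p' r) r)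
    (hp'_deriv : ∀ r ∈ Set.Ioi (0:ℝ), HasDerivAt p' (p'' r) r)
    (hp'_pos : ∀ r ∈ Set.Ioi (0:ℝ), 0 < p' r)
    (hgen : ∀ r ∈ Set.Ioi (0:ℝ), 0 < 2 * p' r + r * p'' r)
    -- data
    (n : ℕ) (hn : 1 ≤ n) (ℓ : ℝ) (hℓ : 0 < ℓ)
    (wbar : ℕ → ℝ) (hwbar : ∀ i, i < n → 0 < wbar i)
    -- `ρimax i = p⁻¹(w̄ᵢ)`
    (ρimax : ℕ → ℝ) (hρimax : ∀ i, i < n → 0 ≤ ρimax i ∧ p (ρimax i) = wbar i)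
    -- initial positions
    (xbar : ℕ → ℝ) (hxbar_mono : ∀ i, i < n → xbar i < xbar (i+1))
    (hinit : ∀ i, i < n → ℓ ≤ (xbar (i+1) - xbar i) * ρimax i)
    -- the particle system
    (x : ℕ → ℝ → ℝ)
    (hleadtraj : ∀ t, x n t = xbar n + wbar (n-1) * t)
    (hODE : ∀ i, i < n → ∀ t, 0 ≤ t →
        HasDerivWithinAt (x i) (wbar i - p (ℓ / (x (i+1) t - x i t))) (Set.Ici 0) t)
    (hIC : ∀ i, i ≤ n → x i 0 = xbar i)
    (horder : ∀ t, 0 ≤ t → ∀ i, i < n → x i t < x (i+1) t) :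
    ∀ t, 0 ≤ t →
      (∀ i, i < n →
        ℓ / (xbar n - xbar 0 + wbar (n-1) * t) ≤ ℓ / (x (i+1) t - x i t) ∧
        ℓ / (x (i+1) t - x i t) ≤ ρimax i) ∧
      xbar 0 ≤ x 0 t := by
  -- p is strictly monotone on [0,∞)
  have hpmono : StrictMonoOn p (Set.Ici 0) := by
    apply strictMonoOn_of_deriv_pos (convex_Ici 0) hp_cont
    intro r hr
    rw [interior_Ici] at hr
    rw [(hp_deriv r hr).deriv]
    exact hp'_pos r hr
  have hppos : ∀ r : ℝ, 0 < r → 0 < p r := by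
    intro r hr
    have := hpmono (Set.self_mem_Ici) (Set.mem_Ici.2 hr.le) hr
    rwa [hp0] at this
  -- ρimax i > 0
  have hρpos : ∀ i, i < n → 0 < ρimax i := by
    intro i hi
    rcases (hρimax i hi) with ⟨h0, hpe⟩
    rcases lt_or_eq_of_le h0 with h | h
    · exact h
    · exfalso; rw [← h, hp0] at hpe; linarith [hwbar i hi]
  -- derivative of the leader trajectory
  have hxnfun : x n = fun t => xbar n + wbar (n-1) * t := funext hleadtraj
  have hxn_deriv : ∀ t : ℝ, HasDerivWithinAt (x n) (wbar (n-1)) (Set.Ici 0) t := by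
    intro t
    rw [hxnfun]
    have : HasDerivAt (fun t : ℝ => xbar n + wbar (n-1) * t) (wbar (n-1)) t := by
      simpa using ((hasDerivAt_id t).const_mul (wbar (n-1))).const_add (xbar n)
    exact this.hasDerivWithinAt
  -- key downward induction: gaps stay above ℓ/ρimax i
  have key : ∀ k : ℕ, ∀ i, i < n → n ≤ i + k → ∀ t, 0 ≤ t →
      ℓ / ρimax i ≤ x (i+1) t - x i t := by
    intro k
    induction k with
    | zero => intro i hi hik; omega
    | succ k ih =>
      intro i hi hik
      have hb0 : ℓ / ρimax i ≤ x (i+1) 0 - x i 0 := by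
        rw [hIC (i+1) hi, hIC i (le_of_lt hi)]
        rw [div_le_iff₀ (hρpos i hi)]
        exact hinit i hi
      have hgapderiv : ∀ s : ℝ, 0 ≤ s →
          HasDerivWithinAt (fun u => x (i+1) u - x i u)
            ((if i + 1 = n then wbar (n-1) else wbar (i+1) - p (ℓ / (x (i+2) s - x (i+1) s)))
              - (wbar i - p (ℓ / (x (i+1) s - x i s)))) (Set.Ici 0) s := by
        intro s hs
        by_cases hcase : i + 1 = n
        · subst hcase
          rw [if_pos rfl]
          exact (hxn_deriv s).sub (hODE i hi s hs)
        · rw [if_neg hcase]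
          have hlt : i + 1 < n := by omega
          exact (hODE (i+1) hlt s hs).sub (hODE i hi s hs)
      have := barrier19 (fun u => x (i+1) u - x i u)
        (fun s => (if i + 1 = n then wbar (n-1) else wbar (i+1) - p (ℓ / (x (i+2) s - x (i+1) s)))
              - (wbar i - p (ℓ / (x (i+1) s - x i s)))) (ℓ / ρimax i)
        (fun s hs => hgapderiv s hs) hb0 ?_
      · intro t ht; exact this t ht
      · -- positivity of the derivative below the barrier
        intro s hs hlt
        have hgap : 0 < x (i+1) s - x i s := sub_pos.2 (horder s hs i hi)
        have hR : 0 < ℓ / (x (i+1) s - x i s) := div_pos hℓ hgap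
        have hlt' : x (i+1) s - x i s < ℓ / ρimax i := hlt
        -- below the barrier: ρimax i < R_i
        have hRbig : ρimax i < ℓ / (x (i+1) s - x i s) := by
          rw [lt_div_iff₀ hgap, mul_comm]
          exact (lt_div_iff₀ (hρpos i hi)).1 hlt'
        have hpi : wbar i < p (ℓ / (x (i+1) s - x i s)) := by
          rw [← (hρimax i hi).2]
          exact hpmono (Set.mem_Ici.2 (hρpos i hi).le) (Set.mem_Ici.2 hR.le) hRbig
        by_cases hcase : i + 1 = n
        · subst hcase
          rw [if_pos rfl]
          have hw : wbar (i + 1 - 1) = wbar i := by congr 1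
          rw [hw]; linarith [hppos _ hR]
        · rw [if_neg hcase]
          have hcase : i + 1 < n := by omega
          -- use induction hypothesis for gap i+1
          have hih : ℓ / ρimax (i+1) ≤ x (i+2) s - x (i+1) s :=
            ih (i+1) hcase (by omega) s hs
          have hgap1 : 0 < x (i+2) s - x (i+1) s := sub_pos.2 (horder s hs (i+1) hcase)
          have hR1 : ℓ / (x (i+2) s - x (i+1) s) ≤ ρimax (i+1) := by
            rw [div_le_iff₀ hgap1, mul_comm]
            exact (div_le_iff₀ (hρpos (i+1) hcase)).1 hih
          have hR1pos : 0 < ℓ / (x (i+2) s - x (i+1) s) := div_pos hℓ hgap1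
          have hp1 : p (ℓ / (x (i+2) s - x (i+1) s)) ≤ wbar (i+1) := by
            rw [← (hρimax (i+1) hcase).2]
            exact hpmono.monotoneOn (Set.mem_Ici.2 hR1pos.le)
              (Set.mem_Ici.2 (hρpos (i+1) hcase).le) hR1
          linarith
  -- chain: positions are ordered
  have chain : ∀ t, 0 ≤ t → ∀ j k : ℕ, j ≤ k → k ≤ n → x j t ≤ x k t := by
    intro t ht j k hjk hkn
    induction k, hjk using Nat.le_induction with
    | base => exact le_refl _
    | succ m hm ihm =>
      exact le_trans (ihm (by omega)) (horder t ht m (by omega)).le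
  -- x 0 is monotone
  have hx0mono : MonotoneOn (x 0) (Set.Ici 0) := by
    have hdall : ∀ s ∈ Set.Ioi (0:ℝ), HasDerivAt (x 0)
        (wbar 0 - p (ℓ / (x 1 s - x 0 s))) s := by
      intro s hs
      exact (hODE 0 (by omega) s (le_of_lt hs)).hasDerivAt (Ici_mem_nhds hs)
    apply monotoneOn_of_deriv_nonneg (convex_Ici 0)
    · exact fun s hs => (hODE 0 (by omega) s hs).continuousWithinAt
    · intro s hs
      rw [interior_Ici] at hs
      exact (hdall s hs).differentiableAt.differentiableWithinAt
    · intro s hs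
      rw [interior_Ici] at hs
      rw [(hdall s hs).deriv]
      have hgap : 0 < x 1 s - x 0 s := sub_pos.2 (horder s hs.le 0 (by omega))
      have hkey := key n 0 (by omega) (by omega) s hs.le
      have hR : ℓ / (x 1 s - x 0 s) ≤ ρimax 0 := by
        rw [div_le_iff₀ hgap, mul_comm]
        exact (div_le_iff₀ (hρpos 0 (by omega))).1 hkey
      have hRpos : 0 < ℓ / (x 1 s - x 0 s) := div_pos hℓ hgap
      have : p (ℓ / (x 1 s - x 0 s)) ≤ wbar 0 := by
        rw [← (hρimax 0 (by omega)).2]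
        exact hpmono.monotoneOn (Set.mem_Ici.2 hRpos.le)
          (Set.mem_Ici.2 (hρpos 0 (by omega)).le) hR
      linarith
  -- conclusion
  intro t ht
  have hx0 : xbar 0 ≤ x 0 t := by
    have := hx0mono (Set.self_mem_Ici) (Set.mem_Ici.2 ht) ht
    rwa [hIC 0 (by omega)] at this
  refine ⟨?_, hx0⟩
  intro i hi
  have hgap : 0 < x (i+1) t - x i t := sub_pos.2 (horder t ht i hi)
  have hkey := key n i hi (by omega) t ht
  constructor
  · -- lower bound
    have hle : x (i+1) t - x i t ≤ xbar n - xbar 0 + wbar (n-1) * t := by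
      have h1 : x (i+1) t ≤ x n t := chain t ht (i+1) n hi (le_refl _)
      have h2 : x 0 t ≤ x i t := chain t ht 0 i (by omega) (by omega)
      have h3 : x n t = xbar n + wbar (n-1) * t := hleadtraj t
      linarith
    exact div_le_div_of_nonneg_left hℓ.le hgap hle
  · -- upper bound
    rw [div_le_iff₀ hgap, mul_comm]
    exact (div_le_iff₀ (hρpos i hi)).1 hkey
end
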